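/- Let 0 < ε < 1 and let 𝒮 be a martingale ε-sparse family of triadic subintervals of [0,1). Let K ∈ 𝐊, set J := K^m, and let S(J) be the triadic child of K containing I(J). Define 𝒮¹_K := {I ∈ 𝒮 : I = K, or (I ⊆ J and I is not contained in any member of ch_𝐊(K))} and 𝒮²_K := {I ∈ 𝒮 : I(J) ⊊ I ⊆ S(J)}. There exists a constant C(p) > 0, depending only on p and independent of k, ε, 𝒮, K, and the choices of the intervals I(J), such that for m = 1, 2: Σ_{I ∈ 𝒮^m_K} ⟨w_k⟩_I^p·⟨σ_k⟩_I·|I| ≤ C(p)·3^{−k}·w_k(K)/(1−ε) and Σ_{I ∈ 𝒮^m_K} ⟨σ_k⟩_I^{p'}·⟨w_k⟩_I·|I| ≤ C(p)·σ_k(K)/(1−ε), where p' := p/(p−1). -/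

import Mathlib

open MeasureTheory Set Filter

noncomputable section

namespace RTpaper

/-- The half-open interval `[a, b)` represented by the pair `(a, b)`. -/
def ivSet (I : ℝ × ℝ) : Set ℝ := Set.Ico I.1 I.2

/-- The length of the interval represented by `I`. -/
def len (I : ℝ × ℝ) : ℝ := I.2 - I.1

/-- The middle triadic child of an interval. -/
def mid (I : ℝ × ℝ) : ℝ × ℝ := (I.1 + (I.2 - I.1) / 3, I.2 - (I.2 - I.1) / 3)

/-- The families `𝐊ᵢ` of the Reguera–Thiele construction. -/
def Kfam (k : ℕ) : ℕ → Set (ℝ × ℝ)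
  | 0 => {((0 : ℝ), (1 : ℝ))}
  | (i + 1) =>
      {I | ∃ K ∈ Kfam k i, ∃ j : ℕ, j < 3 ^ (k - 1) ∧
        I = ((mid K).1 + (j : ℝ) * ((3 : ℝ) ^ (1 - (k : ℤ)) * len (mid K)),
             (mid K).1 + ((j : ℝ) + 1) * ((3 : ℝ) ^ (1 - (k : ℤ)) * len (mid K)))}

/-- The families `𝐉ᵢ` (of interest for `i ≥ 1`). -/
def Jfam (k i : ℕ) : Set (ℝ × ℝ) := {J | ∃ K ∈ Kfam k (i - 1), J = mid K}

/-- The family `𝐊 = ⋃ᵢ 𝐊ᵢ`. -/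
def KK (k : ℕ) : Set (ℝ × ℝ) := ⋃ i, Kfam k i

/-- The family `𝐉 = ⋃_{i ≥ 1} 𝐉ᵢ`. -/
def JJ (k : ℕ) : Set (ℝ × ℝ) := ⋃ i, Jfam k (i + 1)

/-- The chosen triadic interval `I(J)` adjacent to `J` of length `3^{1-k}|J|`, encoded by a
choice function `ch` deciding, for each `J`, whether `I(J)` lies to the right (`true`) or to
the left (`false`) of `J`. -/
def IJ (k : ℕ) (ch : ℝ × ℝ → Bool) (J : ℝ × ℝ) : ℝ × ℝ :=
  if ch J then (J.2, J.2 + (3 : ℝ) ^ (1 - (k : ℤ)) * len J)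
  else (J.1 - (3 : ℝ) ^ (1 - (k : ℤ)) * len J, J.1)

/-- The weight `w_k = Σ_{i ≥ 1} Σ_{J ∈ 𝐉ᵢ} (3^k/(3^{k-1}+1))^i · 1_{I(J)}`. -/
def wgt (k : ℕ) (ch : ℝ × ℝ → Bool) (x : ℝ) : ℝ :=
  ∑' i : ℕ, ∑' J : ↥(Jfam k (i + 1)),
    Set.indicator (ivSet (IJ k ch (J : ℝ × ℝ)))
      (fun _ => ((3 : ℝ) ^ k / ((3 : ℝ) ^ (k - 1) + 1)) ^ (i + 1)) x

/-- The weight `σ_k = w_k^{1-p}` on `{w_k > 0}`, and `0` elsewhere. -/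
def sgm (p : ℝ) (k : ℕ) (ch : ℝ × ℝ → Bool) (x : ℝ) : ℝ :=
  if 0 < wgt k ch x then wgt k ch x ^ (1 - p) else 0

/-- `u(I) = ∫_I u`. -/
def mass (u : ℝ → ℝ) (I : ℝ × ℝ) : ℝ := ∫ x in ivSet I, u x

/-- `⟨u⟩_I = u(I)/|I|`. -/
def avg (u : ℝ → ℝ) (I : ℝ × ℝ) : ℝ := mass u I / len I

/-- `ch_𝐊(K)`: the members of `𝐊_{i+1}` contained in `K ∈ 𝐊ᵢ`. -/
def chK (k : ℕ) (K : ℝ × ℝ) : Set (ℝ × ℝ) :=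
  {K' | ∃ i, K ∈ Kfam k i ∧ K' ∈ Kfam k (i + 1) ∧ ivSet K' ⊆ ivSet K}

/-- Triadic intervals of `ℝ`. -/
def IsTriadic (I : ℝ × ℝ) : Prop :=
  ∃ n j : ℤ, I.1 = (j : ℝ) * (3 : ℝ) ^ (-n) ∧ I.2 = ((j : ℝ) + 1) * (3 : ℝ) ^ (-n)

/-- Maximal members of `S` strictly contained in `R`. -/
def maxIn (S : Set (ℝ × ℝ)) (R : ℝ × ℝ) : Set (ℝ × ℝ) :=
  {Q | Q ∈ S ∧ ivSet Q ⊂ ivSet R ∧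
    ∀ Q' ∈ S, ivSet Q ⊆ ivSet Q' → ivSet Q' ⊂ ivSet R → ivSet Q' = ivSet Q}

/-- Martingale `ε`-sparse families of (half-open) intervals. -/
def MSparse (ε : ℝ) (S : Set (ℝ × ℝ)) : Prop :=
  S.Countable ∧ (∀ I ∈ S, I.1 < I.2) ∧
    (∀ I ∈ S, ∀ J ∈ S, ivSet I ⊆ ivSet J ∨ ivSet J ⊆ ivSet I ∨ ivSet I ∩ ivSet J = ∅) ∧
    ∀ R ∈ S, (∑' Q : ↥(maxIn S R), len (Q : ℝ × ℝ)) ≤ ε * len R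

/-- `Σ_{I ∈ F} ⟨u⟩_I^q · ⟨v⟩_I · |I|`. -/
def sumTest (q : ℝ) (u v : ℝ → ℝ) (F : Set (ℝ × ℝ)) : ℝ :=
  ∑' I : ↥F, avg u (I : ℝ × ℝ) ^ q * avg v (I : ℝ × ℝ) * len (I : ℝ × ℝ)


namespace RTaux
open RTpaper Set

lemma three_ne : ((3:ℝ)) ≠ 0 := by norm_num
lemma three_pos : (0:ℝ) < 3 := by norm_num

/-- scale of level-i intervals -/
def sc (k i : ℕ) : ℝ := (3:ℝ) ^ (-((i*k : ℕ) : ℤ))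

lemma sc_pos (k i : ℕ) : 0 < sc k i := zpow_pos three_pos _

lemma sc_succ (k i : ℕ) : sc k i = (3:ℝ)^k * sc k (i+1) := by
  unfold sc
  rw [← zpow_natCast (3:ℝ) k, ← zpow_add₀ three_ne]
  congr 1
  push_cast [Nat.succ_mul]
  ring

lemma sc_zero (k : ℕ) : sc k 0 = 1 := by simp [sc]

/-- interval aligned to the triadic grid at scale `3^(-n)` -/
def TriAt (n : ℤ) (I : ℝ × ℝ) : Prop :=
  ∃ j : ℤ, I.1 = (j:ℝ) * (3:ℝ)^(-n) ∧ I.2 = ((j:ℝ)+1) * (3:ℝ)^(-n)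

lemma TriAt.len {n : ℤ} {I : ℝ × ℝ} (h : TriAt n I) : len I = (3:ℝ)^(-n) := by
  obtain ⟨j, h1, h2⟩ := h; simp [RTpaper.len, h1, h2]; ring

lemma TriAt.lt {n : ℤ} {I : ℝ × ℝ} (h : TriAt n I) : I.1 < I.2 := by
  obtain ⟨j, h1, h2⟩ := h
  have := zpow_pos three_pos (-n)
  rw [h1, h2]; nlinarith

lemma Kfam_struct {k : ℕ} (hk : 1 ≤ k) :
    ∀ i : ℕ, ∀ K ∈ Kfam k i, ∃ j : ℕ, j + 1 ≤ 3 ^ (i * k) ∧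
      K.1 = (j : ℝ) * sc k i ∧ K.2 = ((j : ℝ) + 1) * sc k i := by
  intro i
  induction i with
  | zero =>
    intro K hK
    simp only [Kfam, mem_singleton_iff] at hK
    subst hK
    exact ⟨0, by norm_num, by simp [sc_zero], by simp [sc_zero]⟩
  | succ i ih =>
    rintro K ⟨K₀, hK₀, j', hj', rfl⟩
    obtain ⟨j, hjb, h1, h2⟩ := ih K₀ hK₀
    have hmid1 : (mid K₀).1 = (j:ℝ) * sc k i + sc k i / 3 := by
      simp only [mid, h1, h2]; ring
    have hlenmid : len (mid K₀) = sc k i / 3 := by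
      simp only [RTpaper.len, mid, h1, h2]; ring
    have hL : (3:ℝ)^(1-(k:ℤ)) * len (mid K₀) = sc k (i+1) := by
      rw [hlenmid, sc_succ k i]
      have : (3:ℝ)^(1-(k:ℤ)) = 3 * ((3:ℝ)^(k:ℕ))⁻¹ := by
        rw [zpow_sub₀ three_ne, zpow_one, zpow_natCast]; ring
      rw [this]
      have := pow_ne_zero k three_ne
      field_simp
    have hsck : sc k i / 3 = (3:ℝ)^(k-1) * sc k (i+1) := by
      rw [sc_succ k i]
      have h3k : (3:ℝ)^(k:ℕ) = 3 * (3:ℝ)^(k-1) := by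
        conv_lhs => rw [show k = (k-1)+1 by omega]
        rw [pow_succ]; ring
      rw [h3k]; ring
    refine ⟨j * 3^k + 3^(k-1) + j', ?_, ?_, ?_⟩
    · have h2le : 2 * 3^(k-1) ≤ 3^k := by
        conv_rhs => rw [show k = (k-1)+1 by omega]
        rw [pow_succ]; omega
      calc j * 3^k + 3^(k-1) + j' + 1 ≤ j * 3^k + 2*3^(k-1) := by omega
        _ ≤ j * 3^k + 3^k := by omega
        _ = (j+1) * 3^k := by ring
        _ ≤ 3^(i*k) * 3^k := Nat.mul_le_mul_right _ hjb
        _ = 3^((i+1)*k) := by rw [← pow_add]; congr 1; ring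
    · have e : sc k i = 3^k * sc k (i+1) := sc_succ k i
      rw [hL, hmid1, hsck, e]
      push_cast
      ring
    · have e : sc k i = 3^k * sc k (i+1) := sc_succ k i
      rw [hL, hmid1, hsck, e]
      push_cast
      ring

lemma Kfam_triAt {k : ℕ} (hk : 1 ≤ k) {i : ℕ} {K : ℝ × ℝ} (hK : K ∈ Kfam k i) :
    TriAt ((i*k : ℕ) : ℤ) K := by
  obtain ⟨j, _, h1, h2⟩ := Kfam_struct hk i K hK
  exact ⟨j, by push_cast [h1, sc]; ring, by push_cast [h2, sc]; ring⟩

lemma Kfam_len {k : ℕ} (hk : 1 ≤ k) {i : ℕ} {K : ℝ × ℝ} (hK : K ∈ Kfam k i) :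
    len K = sc k i := (Kfam_triAt hk hK).len

lemma Kfam_lt {k : ℕ} (hk : 1 ≤ k) {i : ℕ} {K : ℝ × ℝ} (hK : K ∈ Kfam k i) :
    K.1 < K.2 := (Kfam_triAt hk hK).lt

lemma Kfam_nonneg {k : ℕ} (hk : 1 ≤ k) {i : ℕ} {K : ℝ × ℝ} (hK : K ∈ Kfam k i) :
    0 ≤ K.1 ∧ K.2 ≤ 1 := by
  obtain ⟨j, hjb, h1, h2⟩ := Kfam_struct hk i K hK
  constructor
  · rw [h1]; exact mul_nonneg (Nat.cast_nonneg j) (sc_pos k i).le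
  · rw [h2]
    have : ((j:ℝ)+1) ≤ (3:ℝ)^(i*k) := by
      have := hjb
      have : ((j+1 : ℕ) : ℝ) ≤ ((3^(i*k) : ℕ) : ℝ) := Nat.cast_le.2 hjb
      push_cast at this
      linarith
    have hs : sc k i = ((3:ℝ)^(i*k))⁻¹ := by
      rw [sc, zpow_neg, zpow_natCast]
    rw [hs]
    rw [inv_eq_one_div]
    rw [mul_div_assoc'] 
    apply div_le_one_of_le₀
    · linarith
    · positivity

/-- the triadic lattice: nested or disjoint -/
lemma TriAt.subset_or_disjoint {n m : ℤ} {I I' : ℝ × ℝ}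
    (hI : TriAt n I) (hI' : TriAt m I') (hnm : n ≤ m) :
    ivSet I' ⊆ ivSet I ∨ ivSet I' ∩ ivSet I = ∅ := by
  obtain ⟨u, hu1, hu2⟩ := hI
  obtain ⟨v, hv1, hv2⟩ := hI'
  set d : ℕ := (m - n).toNat with hd
  have hmn : m = n + d := by omega
  have h3d : (3:ℝ)^(-n) = (3:ℝ)^(d:ℕ) * (3:ℝ)^(-m) := by
    rw [← zpow_natCast (3:ℝ) d, ← zpow_add₀ three_ne]; congr 1; omega
  have hpm : (0:ℝ) < (3:ℝ)^(-m) := zpow_pos three_pos _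
  rcases lt_or_ge v (u * 3^d) with hlt | hge
  · right
    apply eq_empty_iff_forall_notMem.2
    rintro x ⟨⟨hx1, hx2⟩, ⟨hx3, hx4⟩⟩
    rw [hv2] at hx2
    rw [hu1] at hx3
    have : (v:ℝ) + 1 ≤ ((u:ℝ)) * (3:ℝ)^(d:ℕ) := by
      have h' : (v + 1 : ℤ) ≤ u * 3^d := by omega
      exact_mod_cast h'
    have : ((v:ℝ)+1) * (3:ℝ)^(-m) ≤ (u:ℝ) * (3:ℝ)^(-n) := by
      rw [h3d]; nlinarith
    linarith
  · rcases le_or_gt ((u+1) * 3^d) v with hge2 | hlt2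
    · right
      apply eq_empty_iff_forall_notMem.2
      rintro x ⟨⟨hx1, hx2⟩, ⟨hx3, hx4⟩⟩
      rw [hv1] at hx1
      rw [hu2] at hx4
      have : ((u:ℝ)+1) * (3:ℝ)^(d:ℕ) ≤ (v:ℝ) := by exact_mod_cast hge2
      have : ((u:ℝ)+1) * (3:ℝ)^(-n) ≤ (v:ℝ) * (3:ℝ)^(-m) := by
        rw [h3d]; nlinarith
      linarith
    · left
      have hA : (u:ℝ) * (3:ℝ)^(d:ℕ) ≤ (v:ℝ) := by exact_mod_cast hge
      have hB : (v:ℝ) + 1 ≤ ((u:ℝ)+1) * (3:ℝ)^(d:ℕ) := by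
        have h' : (v + 1 : ℤ) ≤ (u+1) * 3^d := by omega
        exact_mod_cast h'
      apply Ico_subset_Ico
      · rw [hv1, hu1, h3d]; nlinarith
      · rw [hv2, hu2, h3d]; nlinarith

end RTaux
namespace RTaux
open RTpaper Set

lemma sc_div3 {k : ℕ} (hk : 1 ≤ k) (i : ℕ) :
    sc k i / 3 = (3:ℝ)^(k-1) * sc k (i+1) := by
  rw [sc_succ k i]
  have h3k : (3:ℝ)^(k:ℕ) = 3 * (3:ℝ)^(k-1) := by
    conv_lhs => rw [show k = (k-1)+1 by omega]
    rw [pow_succ]; ring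
  rw [h3k]; ring

lemma IJlen {k : ℕ} (hk : 1 ≤ k) (i : ℕ) :
    (3:ℝ)^(1-(k:ℤ)) * (sc k i / 3) = sc k (i+1) := by
  rw [sc_div3 hk i]
  have : (3:ℝ)^(1-(k:ℤ)) = 3 * ((3:ℝ)^(k:ℕ))⁻¹ := by
    rw [zpow_sub₀ three_ne, zpow_one, zpow_natCast]; ring
  rw [this]
  have h3k : (3:ℝ)^(k:ℕ) = 3 * (3:ℝ)^(k-1) := by
    conv_lhs => rw [show k = (k-1)+1 by omega]
    rw [pow_succ]; ring
  have hne : ((3:ℝ)^(k-1)) ≠ 0 := pow_ne_zero _ three_ne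
  rw [h3k]
  field_simp

lemma scpow_ge_one (k m : ℕ) : (1:ℝ) ≤ (3:ℝ)^m := one_le_pow₀ (by norm_num)

/-- endpoint package for members of `Kfam` -/
lemma Kfam_pack {k : ℕ} (hk : 1 ≤ k) {i : ℕ} {K : ℝ × ℝ} (hK : K ∈ Kfam k i) :
    K.2 = K.1 + sc k i ∧ (mid K).1 = K.1 + sc k i / 3 ∧
      (mid K).2 = K.1 + 2 * sc k i / 3 ∧ len (mid K) = sc k i / 3 := by
  obtain ⟨j, _, h1, h2⟩ := Kfam_struct hk i K hK
  refine ⟨by rw [h1, h2]; ring, ?_, ?_, ?_⟩ <;> simp only [mid, RTpaper.len, h1, h2] <;> ring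

lemma mid_subset {K : ℝ × ℝ} (h : K.1 < K.2) : ivSet (mid K) ⊆ ivSet K := by
  apply Ico_subset_Ico <;> simp only [mid] <;> linarith

lemma mid_inj {K K' : ℝ × ℝ} (h : mid K = mid K') : K = K' := by
  simp only [mid, Prod.mk.injEq] at h
  obtain ⟨h1, h2⟩ := h
  have : K.1 = K'.1 := by linarith
  have : K.2 = K'.2 := by linarith
  exact Prod.ext ‹K.1 = K'.1› ‹K.2 = K'.2›

lemma IJ_pack {k : ℕ} (hk : 1 ≤ k) (ch : ℝ × ℝ → Bool) {i : ℕ} {K : ℝ × ℝ}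
    (hK : K ∈ Kfam k i) :
    (IJ k ch (mid K)).2 = (IJ k ch (mid K)).1 + sc k (i+1) ∧
    ((IJ k ch (mid K)).1 = K.1 + 2 * sc k i / 3 ∨
     (IJ k ch (mid K)).1 = K.1 + sc k i / 3 - sc k (i+1)) := by
  obtain ⟨h2, hm1, hm2, hml⟩ := Kfam_pack hk hK
  have hL : (3:ℝ)^(1-(k:ℤ)) * len (mid K) = sc k (i+1) := by rw [hml]; exact IJlen hk i
  by_cases hch : ch (mid K)
  · simp only [IJ, hch, if_true]
    exact ⟨by rw [hL], Or.inl hm2⟩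
  · simp only [IJ, hch, if_false, Bool.false_eq_true]
    exact ⟨by rw [hL]; ring, Or.inr (by rw [hL, hm1])⟩

lemma sc_le_third {k : ℕ} (hk : 1 ≤ k) (i : ℕ) : sc k (i+1) ≤ sc k i / 3 := by
  rw [sc_div3 hk i]
  nlinarith [sc_pos k (i+1), scpow_ge_one k (k-1)]

/-- `I(J) ⊆ K` and `I(J) ∩ J = ∅` -/
lemma IJ_subset_K {k : ℕ} (hk : 1 ≤ k) (ch : ℝ × ℝ → Bool) {i : ℕ} {K : ℝ × ℝ}
    (hK : K ∈ Kfam k i) :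
    ivSet (IJ k ch (mid K)) ⊆ ivSet K ∧
    ivSet (IJ k ch (mid K)) ∩ ivSet (mid K) = ∅ := by
  obtain ⟨h2, hm1, hm2, hml⟩ := Kfam_pack hk hK
  obtain ⟨hij2, hij1⟩ := IJ_pack hk ch hK
  have hsc := sc_pos k i
  have hsc' := sc_pos k (i+1)
  have hth := sc_le_third hk i
  rcases hij1 with h | h
  · constructor
    · apply Ico_subset_Ico <;> simp only [h, hij2, h2] <;> linarith
    · apply eq_empty_iff_forall_notMem.2
      rintro x ⟨⟨hx1, _⟩, ⟨_, hx4⟩⟩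
      rw [h] at hx1; rw [hm2] at hx4; linarith
  · constructor
    · apply Ico_subset_Ico <;> simp only [h, hij2, h2] <;> linarith
    · apply eq_empty_iff_forall_notMem.2
      rintro x ⟨⟨_, hx2⟩, ⟨hx3, _⟩⟩
      simp only [hij2, h] at hx2; rw [hm1] at hx3; linarith

lemma IJ_triAt {k : ℕ} (hk : 1 ≤ k) (ch : ℝ × ℝ → Bool) {i : ℕ} {K : ℝ × ℝ}
    (hK : K ∈ Kfam k i) : TriAt (((i+1)*k : ℕ) : ℤ) (IJ k ch (mid K)) := by
  obtain ⟨j, _, h1, h2⟩ := Kfam_struct hk i K hK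
  obtain ⟨hij2, hij1⟩ := IJ_pack hk ch hK
  have hs : sc k i = (3:ℝ)^k * sc k (i+1) := sc_succ k i
  have hsc' : sc k (i+1) = (3:ℝ)^(-(((i+1)*k : ℕ) : ℤ)) := rfl
  have h3k : (3:ℝ)^(k:ℕ) = 3 * (3:ℝ)^(k-1) := by
    conv_lhs => rw [show k = (k-1)+1 by omega]
    rw [pow_succ]; ring
  rcases hij1 with h | h
  · refine ⟨(j : ℤ) * 3^k + 2 * 3^(k-1), ?_, ?_⟩
    · rw [← hsc', h, h1, hs]; push_cast; rw [h3k]; ring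
    · rw [← hsc', hij2, h, h1, hs]; push_cast; rw [h3k]; ring
  · refine ⟨(j : ℤ) * 3^k + 3^(k-1) - 1, ?_, ?_⟩
    · rw [← hsc', h, h1, hs]; push_cast; rw [h3k]; ring
    · rw [← hsc', hij2, h, h1, hs]; push_cast; rw [h3k]; ring

/-- same-level distinct members are disjoint -/
lemma Kfam_disj {k : ℕ} (hk : 1 ≤ k) {i : ℕ} {K K' : ℝ × ℝ}
    (hK : K ∈ Kfam k i) (hK' : K' ∈ Kfam k i) (hne : K ≠ K') :
    ivSet K ∩ ivSet K' = ∅ := by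
  obtain ⟨j, _, h1, h2⟩ := Kfam_struct hk i K hK
  obtain ⟨j', _, h1', h2'⟩ := Kfam_struct hk i K' hK'
  have hsc := sc_pos k i
  have hjj : j ≠ j' := by
    rintro rfl
    exact hne (Prod.ext (by rw [h1, h1']) (by rw [h2, h2']))
  apply eq_empty_iff_forall_notMem.2
  rintro x ⟨⟨hx1, hx2⟩, ⟨hx3, hx4⟩⟩
  rcases Nat.lt_or_ge j j' with h | h
  · have : (j:ℝ) + 1 ≤ (j':ℝ) := by exact_mod_cast h
    rw [h2] at hx2; rw [h1'] at hx3; nlinarith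
  · have hlt : j' < j := by omega
    have : (j':ℝ) + 1 ≤ (j:ℝ) := by exact_mod_cast hlt
    rw [h1] at hx1; rw [h2'] at hx4; nlinarith

lemma child_subset_mid {k : ℕ} (hk : 1 ≤ k) {i : ℕ} {K : ℝ × ℝ} (hK : K ∈ Kfam k i)
    {j : ℕ} (hj : j < 3^(k-1)) :
    ivSet ((mid K).1 + (j : ℝ) * ((3 : ℝ) ^ (1 - (k : ℤ)) * len (mid K)),
           (mid K).1 + ((j : ℝ) + 1) * ((3 : ℝ) ^ (1 - (k : ℤ)) * len (mid K)))
      ⊆ ivSet (mid K) := by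
  obtain ⟨h2, hm1, hm2, hml⟩ := Kfam_pack hk hK
  have hL : (3:ℝ)^(1-(k:ℤ)) * len (mid K) = sc k (i+1) := by rw [hml]; exact IJlen hk i
  have hsc' := sc_pos k (i+1)
  have hj' : ((j:ℝ)+1) ≤ (3:ℝ)^(k-1) := by exact_mod_cast hj
  have h3 : (3:ℝ)^(k-1) * sc k (i+1) = sc k i / 3 := (sc_div3 hk i).symm
  apply Ico_subset_Ico
  · simp only [hL]; nlinarith [Nat.cast_nonneg (α := ℝ) j]
  · simp only [hL, hm1, hm2]; nlinarith

/-- deeper-level members sit inside the middle third of a level-i member -/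
lemma Kfam_sub_mid {k : ℕ} (hk : 1 ≤ k) (i : ℕ) :
    ∀ d : ℕ, ∀ K' ∈ Kfam k (i + d + 1), ∃ K ∈ Kfam k i, ivSet K' ⊆ ivSet (mid K) := by
  intro d
  induction d with
  | zero =>
    rintro K' ⟨K, hK, j, hj, rfl⟩
    exact ⟨K, hK, child_subset_mid hk hK hj⟩
  | succ d ih =>
    rintro K' ⟨K'', hK'', j, hj, rfl⟩
    obtain ⟨K, hK, hsub⟩ := ih K'' hK''
    refine ⟨K, hK, ?_⟩
    refine (child_subset_mid hk hK'' hj).trans ((mid_subset (Kfam_lt hk hK'')).trans hsub)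

/-- a deeper-level member is inside or disjoint from a given member -/
lemma Kfam_deeper {k : ℕ} (hk : 1 ≤ k) {i m : ℕ} (him : i ≤ m) {K K' : ℝ × ℝ}
    (hK : K ∈ Kfam k i) (hK' : K' ∈ Kfam k m) :
    ivSet K' ⊆ ivSet K ∨ ivSet K' ∩ ivSet K = ∅ := by
  rcases eq_or_lt_of_le him with rfl | hlt
  · rcases eq_or_ne K' K with rfl | hne
    · exact Or.inl subset_rfl
    · exact Or.inr (Kfam_disj hk hK' hK hne)
  · obtain ⟨d, rfl⟩ : ∃ d, m = i + d + 1 := ⟨m - i - 1, by omega⟩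
    obtain ⟨K₀, hK₀, hsub⟩ := Kfam_sub_mid hk i d K' hK'
    rcases eq_or_ne K₀ K with rfl | hne
    · exact Or.inl (hsub.trans (mid_subset (Kfam_lt hk hK₀)))
    · right
      apply eq_empty_iff_forall_notMem.2
      rintro x ⟨hx1, hx2⟩
      have hx0 : x ∈ ivSet K₀ := mid_subset (Kfam_lt hk hK₀) (hsub hx1)
      exact eq_empty_iff_forall_notMem.1 (Kfam_disj hk hK₀ hK hne) x ⟨hx0, hx2⟩

/-- the supports `I(J)`, over all levels and members, are pairwise disjoint -/
lemma IJ_disj {k : ℕ} (hk : 1 ≤ k) (ch : ℝ × ℝ → Bool) {i i' : ℕ} {K K' : ℝ × ℝ}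
    (hK : K ∈ Kfam k i) (hK' : K' ∈ Kfam k i') (hne : (i, K) ≠ (i', K')) :
    ivSet (IJ k ch (mid K)) ∩ ivSet (IJ k ch (mid K')) = ∅ := by
  -- wlog-free double case analysis
  have main : ∀ {a b : ℕ} {A B : ℝ × ℝ}, A ∈ Kfam k a → B ∈ Kfam k b → a < b →
      ivSet (IJ k ch (mid A)) ∩ ivSet (IJ k ch (mid B)) = ∅ := by
    intro a b A B hA hB hab
    obtain ⟨d, rfl⟩ : ∃ d, b = a + d + 1 := ⟨b - a - 1, by omega⟩
    obtain ⟨K₀, hK₀, hsub⟩ := Kfam_sub_mid hk a d B hB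
    have hBsub : ivSet (IJ k ch (mid B)) ⊆ ivSet (mid K₀) :=
      fun x hx => hsub ((IJ_subset_K hk ch hB).1 hx)
    rcases eq_or_ne K₀ A with rfl | hne'
    · apply eq_empty_iff_forall_notMem.2
      rintro x ⟨hx1, hx2⟩
      exact eq_empty_iff_forall_notMem.1 (IJ_subset_K hk ch hK₀).2 x ⟨hx1, hBsub hx2⟩
    · apply eq_empty_iff_forall_notMem.2
      rintro x ⟨hx1, hx2⟩
      have h1 : x ∈ ivSet A := (IJ_subset_K hk ch hA).1 hx1
      have h2 : x ∈ ivSet K₀ := mid_subset (Kfam_lt hk hK₀) (hBsub hx2)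
      exact eq_empty_iff_forall_notMem.1 (Kfam_disj hk hK₀ hA hne') x ⟨h2, h1⟩
  rcases Nat.lt_trichotomy i i' with h | h | h
  · exact main hK hK' h
  · subst h
    have hKne : K ≠ K' := fun hKK => hne (by rw [hKK])
    apply eq_empty_iff_forall_notMem.2
    rintro x ⟨hx1, hx2⟩
    have h1 : x ∈ ivSet K := (IJ_subset_K hk ch hK).1 hx1
    have h2 : x ∈ ivSet K' := (IJ_subset_K hk ch hK').1 hx2
    exact eq_empty_iff_forall_notMem.1 (Kfam_disj hk hK hK' hKne) x ⟨h1, h2⟩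
  · rw [Set.inter_comm]; exact main hK' hK h

lemma Kfam_countable (k i : ℕ) : (Kfam k i).Countable := by
  induction i with
  | zero => exact Set.countable_singleton _
  | succ i ih =>
    have : Kfam k (i+1) ⊆ ⋃ K ∈ Kfam k i, ⋃ j ∈ Set.Iio (3^(k-1) : ℕ),
        {((mid K).1 + (j : ℝ) * ((3 : ℝ) ^ (1 - (k : ℤ)) * len (mid K)),
          (mid K).1 + ((j : ℝ) + 1) * ((3 : ℝ) ^ (1 - (k : ℤ)) * len (mid K)))} := by
      rintro K' ⟨K, hK, j, hj, rfl⟩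
      exact Set.mem_biUnion hK (Set.mem_biUnion (Set.mem_Iio.mpr hj) rfl)
    refine Set.Countable.mono this ?_
    exact ih.biUnion (fun K _ => Set.Countable.biUnion
      (Set.to_countable (Set.Iio (3^(k-1) : ℕ))) (fun j _ => Set.countable_singleton _))

lemma Jfam_eq (k i : ℕ) : Jfam k (i+1) = {J | ∃ K ∈ Kfam k i, J = mid K} := by
  simp [Jfam]

lemma Kfam_level_unique {k : ℕ} (hk : 1 ≤ k) {i i' : ℕ} {K : ℝ × ℝ}
    (hK : K ∈ Kfam k i) (hK' : K ∈ Kfam k i') : i = i' := by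
  have h1 := Kfam_len hk hK
  have h2 := Kfam_len hk hK'
  have : sc k i = sc k i' := by rw [← h1, ← h2]
  have hmono := zpow_right_strictMono₀ (show (1:ℝ) < 3 by norm_num)
  have := hmono.injective (show (3:ℝ)^(-((i*k:ℕ):ℤ)) = (3:ℝ)^(-((i'*k:ℕ):ℤ)) from this)
  have : i * k = i' * k := by omega
  have hk0 : k ≠ 0 := by omega
  exact Nat.eq_of_mul_eq_mul_right (by omega) this

end RTaux
namespace RTaux
open RTpaper Set MeasureTheory

def aK (k : ℕ) : ℝ := (3:ℝ)^k / ((3:ℝ)^(k-1) + 1)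

lemma aK_den_pos (k : ℕ) : (0:ℝ) < (3:ℝ)^(k-1) + 1 := by positivity

lemma aK_pos (k : ℕ) : 0 < aK k := div_pos (by positivity) (aK_den_pos k)

lemma pow_pred (hk : 1 ≤ k) : (3:ℝ)^(k:ℕ) = 3 * (3:ℝ)^(k-1) := by
  conv_lhs => rw [show k = (k-1)+1 by omega]
  rw [pow_succ]; ring

lemma one_lt_aK {k : ℕ} (hk : 1 ≤ k) : 1 < aK k := by
  rw [aK, lt_div_iff₀ (aK_den_pos k), pow_pred hk]
  nlinarith [scpow_ge_one k (k-1)]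

lemma aK_lt_three {k : ℕ} (hk : 1 ≤ k) : aK k < 3 := by
  rw [aK, div_lt_iff₀ (aK_den_pos k), pow_pred hk]
  nlinarith [pow_pos three_pos (k-1)]

lemma aK_mul (k : ℕ) : aK k * ((3:ℝ)^(k-1) + 1) = (3:ℝ)^k :=
  div_mul_cancel₀ _ (ne_of_gt (aK_den_pos k))

lemma aK_div_lt_one {k : ℕ} (hk : 1 ≤ k) : aK k / 3 < 1 := by
  have := aK_lt_three hk; linarith

lemma aK_div_nonneg (k : ℕ) : 0 ≤ aK k / 3 := div_nonneg (aK_pos k).le (by norm_num)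

/-- the value of `wgt` off all supports -/
lemma wgt_eq_zero {k : ℕ} (ch : ℝ × ℝ → Bool) {x : ℝ}
    (hx : ∀ i : ℕ, ∀ K ∈ Kfam k i, x ∉ ivSet (IJ k ch (mid K))) : wgt k ch x = 0 := by
  unfold wgt
  have h : ∀ i : ℕ, (∑' J : ↥(Jfam k (i+1)),
      Set.indicator (ivSet (IJ k ch (J : ℝ × ℝ)))
        (fun _ => ((3 : ℝ) ^ k / ((3 : ℝ) ^ (k - 1) + 1)) ^ (i + 1)) x) = 0 := by
    intro i
    have h2 : ∀ J : ↥(Jfam k (i+1)), Set.indicator (ivSet (IJ k ch (J : ℝ × ℝ)))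
        (fun _ => ((3 : ℝ) ^ k / ((3 : ℝ) ^ (k - 1) + 1)) ^ (i + 1)) x = 0 := by
      rintro ⟨J, hJ⟩
      rw [Jfam_eq] at hJ
      obtain ⟨K, hK, rfl⟩ := hJ
      exact indicator_of_notMem (hx i K hK) _
    rw [tsum_congr h2, tsum_zero]
  rw [tsum_congr h, tsum_zero]

/-- the value of `wgt` on the support attached to a level-`i` member -/
lemma wgt_eq_mem {k : ℕ} (hk : 1 ≤ k) (ch : ℝ × ℝ → Bool) {i : ℕ} {K : ℝ × ℝ}
    (hK : K ∈ Kfam k i) {x : ℝ} (hx : x ∈ ivSet (IJ k ch (mid K))) :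
    wgt k ch x = (aK k)^(i+1) := by
  have key : ∀ i' : ℕ, ∀ K' ∈ Kfam k i', (i', K') ≠ (i, K) →
      x ∉ ivSet (IJ k ch (mid K')) := by
    intro i' K' hK' hne hmem
    have hdis := IJ_disj hk ch hK' hK hne
    exact (eq_empty_iff_forall_notMem.1 hdis x) ⟨hmem, hx⟩
  unfold wgt
  have hmemJ : mid K ∈ Jfam k (i+1) := by rw [Jfam_eq]; exact ⟨K, hK, rfl⟩
  rw [tsum_eq_single i ?_]
  · rw [tsum_eq_single (⟨mid K, hmemJ⟩ : ↥(Jfam k (i+1))) ?_]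
    · exact indicator_of_mem hx _
    · rintro ⟨J', hJ'⟩ hne
      rw [Jfam_eq] at hJ'
      obtain ⟨K', hK', rfl⟩ := hJ'
      have hKne : K' ≠ K := by
        intro hKK; subst hKK
        exact hne rfl
      exact indicator_of_notMem (key i K' hK' (by simp [hKne])) _
  · intro i' hne
    have h2 : ∀ J : ↥(Jfam k (i'+1)), Set.indicator (ivSet (IJ k ch (J : ℝ × ℝ)))
        (fun _ => ((3 : ℝ) ^ k / ((3 : ℝ) ^ (k - 1) + 1)) ^ (i' + 1)) x = 0 := by
      rintro ⟨J, hJ⟩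
      rw [Jfam_eq] at hJ
      obtain ⟨K', hK', rfl⟩ := hJ
      exact indicator_of_notMem (key i' K' hK' (by simp [hne])) _
    rw [tsum_congr h2, tsum_zero]

def bK (p : ℝ) (k : ℕ) : ℝ := aK k ^ (1 - p)

lemma bK_pos (p : ℝ) (k : ℕ) : 0 < bK p k := Real.rpow_pos_of_pos (aK_pos k) _

lemma bK_lt_one {p : ℝ} (hp : 1 < p) {k : ℕ} (hk : 1 ≤ k) : bK p k < 1 :=
  Real.rpow_lt_one_of_one_lt_of_neg (one_lt_aK hk) (by linarith)

lemma pow_rpow_bK (p : ℝ) (k m : ℕ) : ((aK k)^m : ℝ) ^ (1-p) = (bK p k)^m := by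
  rw [← Real.rpow_natCast (aK k) m, ← Real.rpow_mul (aK_pos k).le, mul_comm,
    Real.rpow_mul (aK_pos k).le, Real.rpow_natCast]
  rfl

lemma sgm_eq_zero {p : ℝ} {k : ℕ} (ch : ℝ × ℝ → Bool) {x : ℝ}
    (hx : ∀ i : ℕ, ∀ K ∈ Kfam k i, x ∉ ivSet (IJ k ch (mid K))) : sgm p k ch x = 0 := by
  unfold sgm
  rw [wgt_eq_zero ch hx]
  simp

lemma sgm_eq_mem {p : ℝ} {k : ℕ} (hk : 1 ≤ k) (ch : ℝ × ℝ → Bool) {i : ℕ} {K : ℝ × ℝ}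
    (hK : K ∈ Kfam k i) {x : ℝ} (hx : x ∈ ivSet (IJ k ch (mid K))) :
    sgm p k ch x = (bK p k)^(i+1) := by
  unfold sgm
  rw [wgt_eq_mem hk ch hK hx, if_pos (pow_pos (aK_pos k) _), pow_rpow_bK]

/-- supports of level `i` -/
def Dset (k : ℕ) (ch : ℝ × ℝ → Bool) (i : ℕ) : Set ℝ :=
  ⋃ K ∈ Kfam k i, ivSet (IJ k ch (mid K))

lemma Dset_meas {k : ℕ} (ch : ℝ × ℝ → Bool) (i : ℕ) : MeasurableSet (Dset k ch i) :=
  MeasurableSet.biUnion (Kfam_countable k i) (fun _ _ => measurableSet_Ico)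

def Wf (k : ℕ) (ch : ℝ × ℝ → Bool) (x : ℝ) : ENNReal :=
  ∑' i : ℕ, (Dset k ch i).indicator (fun _ => ENNReal.ofReal ((aK k)^(i+1))) x

def Vf (p : ℝ) (k : ℕ) (ch : ℝ × ℝ → Bool) (x : ℝ) : ENNReal :=
  ∑' i : ℕ, (Dset k ch i).indicator (fun _ => ENNReal.ofReal ((bK p k)^(i+1))) x

lemma ofReal_wgt {k : ℕ} (hk : 1 ≤ k) (ch : ℝ × ℝ → Bool) (x : ℝ) :
    ENNReal.ofReal (wgt k ch x) = Wf k ch x := by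
  by_cases hx : ∃ i : ℕ, ∃ K ∈ Kfam k i, x ∈ ivSet (IJ k ch (mid K))
  · obtain ⟨i, K, hK, hmem⟩ := hx
    rw [wgt_eq_mem hk ch hK hmem]
    unfold Wf
    rw [tsum_eq_single i ?_]
    · have hxD : x ∈ Dset k ch i := mem_iUnion₂.2 ⟨K, hK, hmem⟩
      exact (Set.indicator_of_mem hxD (fun _ => ENNReal.ofReal ((aK k)^(i+1)))).symm
    · intro i' hne
      apply indicator_of_notMem
      intro hmem'
      obtain ⟨K', hK', hmem'⟩ := mem_iUnion₂.1 hmem'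
      have hdis := IJ_disj hk ch hK' hK (by simp [hne])
      exact (eq_empty_iff_forall_notMem.1 hdis x) ⟨hmem', hmem⟩
  · push_neg at hx
    rw [wgt_eq_zero ch hx, ENNReal.ofReal_zero]
    unfold Wf
    symm
    have h : ∀ i : ℕ, (Dset k ch i).indicator
        (fun _ => ENNReal.ofReal ((aK k)^(i+1))) x = 0 := by
      intro i
      apply indicator_of_notMem
      intro hmem
      obtain ⟨K, hK, hmem⟩ := mem_iUnion₂.1 hmem
      exact hx i K hK hmem
    rw [tsum_congr h, tsum_zero]

lemma ofReal_sgm {p : ℝ} {k : ℕ} (hk : 1 ≤ k) (ch : ℝ × ℝ → Bool) (x : ℝ) :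
    ENNReal.ofReal (sgm p k ch x) = Vf p k ch x := by
  by_cases hx : ∃ i : ℕ, ∃ K ∈ Kfam k i, x ∈ ivSet (IJ k ch (mid K))
  · obtain ⟨i, K, hK, hmem⟩ := hx
    rw [sgm_eq_mem hk ch hK hmem]
    unfold Vf
    rw [tsum_eq_single i ?_]
    · have hxD : x ∈ Dset k ch i := mem_iUnion₂.2 ⟨K, hK, hmem⟩
      exact (Set.indicator_of_mem hxD (fun _ => ENNReal.ofReal ((bK p k)^(i+1)))).symm
    · intro i' hne
      apply indicator_of_notMem
      intro hmem'
      obtain ⟨K', hK', hmem'⟩ := mem_iUnion₂.1 hmem'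
      have hdis := IJ_disj hk ch hK' hK (by simp [hne])
      exact (eq_empty_iff_forall_notMem.1 hdis x) ⟨hmem', hmem⟩
  · push_neg at hx
    rw [sgm_eq_zero ch hx, ENNReal.ofReal_zero]
    unfold Vf
    symm
    have h : ∀ i : ℕ, (Dset k ch i).indicator
        (fun _ => ENNReal.ofReal ((bK p k)^(i+1))) x = 0 := by
      intro i
      apply indicator_of_notMem
      intro hmem
      obtain ⟨K, hK, hmem⟩ := mem_iUnion₂.1 hmem
      exact hx i K hK hmem
    rw [tsum_congr h, tsum_zero]

lemma wgt_nonneg {k : ℕ} (hk : 1 ≤ k) (ch : ℝ × ℝ → Bool) (x : ℝ) : 0 ≤ wgt k ch x := by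
  by_cases hx : ∃ i : ℕ, ∃ K ∈ Kfam k i, x ∈ ivSet (IJ k ch (mid K))
  · obtain ⟨i, K, hK, hmem⟩ := hx
    rw [wgt_eq_mem hk ch hK hmem]
    exact pow_nonneg (aK_pos k).le _
  · push_neg at hx
    rw [wgt_eq_zero ch hx]

lemma sgm_nonneg {p : ℝ} {k : ℕ} (hk : 1 ≤ k) (ch : ℝ × ℝ → Bool) (x : ℝ) :
    0 ≤ sgm p k ch x := by
  by_cases hx : ∃ i : ℕ, ∃ K ∈ Kfam k i, x ∈ ivSet (IJ k ch (mid K))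
  · obtain ⟨i, K, hK, hmem⟩ := hx
    rw [sgm_eq_mem hk ch hK hmem]
    exact pow_nonneg (bK_pos p k).le _
  · push_neg at hx
    rw [sgm_eq_zero ch hx]

/-- generic lintegral of the level-sum against any set -/
lemma lint_layer {k : ℕ} (ch : ℝ × ℝ → Bool) (c : ℕ → ℝ) (A : Set ℝ) :
    ∫⁻ x in A, (∑' i : ℕ, (Dset k ch i).indicator (fun _ => ENNReal.ofReal (c i)) x) =
      ∑' i : ℕ, ENNReal.ofReal (c i) * volume (Dset k ch i ∩ A) := by
  rw [lintegral_tsum (fun i => ((measurable_const.indicator (Dset_meas ch i)).aemeasurable))]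
  congr 1
  funext i
  rw [lintegral_indicator_const (Dset_meas ch i), Measure.restrict_apply (Dset_meas ch i)]

/-- lower levels do not meet a level-`j` member -/
lemma Dset_inter_lt {k : ℕ} (hk : 1 ≤ k) (ch : ℝ × ℝ → Bool) {i j : ℕ} (hij : i < j)
    {K : ℝ × ℝ} (hK : K ∈ Kfam k j) : Dset k ch i ∩ ivSet K = ∅ := by
  apply eq_empty_iff_forall_notMem.2
  rintro x ⟨hx1, hx2⟩
  obtain ⟨K', hK', hmem⟩ := mem_iUnion₂.1 hx1
  obtain ⟨d, rfl⟩ : ∃ d, j = i + d + 1 := ⟨j - i - 1, by omega⟩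
  obtain ⟨K₀, hK₀, hsub⟩ := Kfam_sub_mid hk i d K hK
  rcases eq_or_ne K₀ K' with rfl | hne
  · exact (eq_empty_iff_forall_notMem.1 (IJ_subset_K hk ch hK₀).2 x) ⟨hmem, hsub hx2⟩
  · have h1 : x ∈ ivSet K₀ := mid_subset (Kfam_lt hk hK₀) (hsub hx2)
    have h2 : x ∈ ivSet K' := (IJ_subset_K hk ch hK').1 hmem
    exact (eq_empty_iff_forall_notMem.1 (Kfam_disj hk hK₀ hK' hne) x) ⟨h1, h2⟩

/-- the same level meets a member exactly in its own support -/
lemma Dset_inter_eq {k : ℕ} (hk : 1 ≤ k) (ch : ℝ × ℝ → Bool) {j : ℕ}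
    {K : ℝ × ℝ} (hK : K ∈ Kfam k j) :
    Dset k ch j ∩ ivSet K = ivSet (IJ k ch (mid K)) := by
  apply Set.Subset.antisymm
  · rintro x ⟨hx1, hx2⟩
    obtain ⟨K', hK', hmem⟩ := mem_iUnion₂.1 hx1
    rcases eq_or_ne K' K with rfl | hne
    · exact hmem
    · exfalso
      have h2 : x ∈ ivSet K' := (IJ_subset_K hk ch hK').1 hmem
      exact (eq_empty_iff_forall_notMem.1 (Kfam_disj hk hK' hK hne) x) ⟨h2, hx2⟩
  · intro x hx
    exact ⟨mem_biUnion hK hx, (IJ_subset_K hk ch hK).1 hx⟩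

/-- deeper levels meet a member inside its middle third -/
lemma Dset_inter_gt {k : ℕ} (hk : 1 ≤ k) (ch : ℝ × ℝ → Bool) {i j : ℕ} (hij : j < i)
    {K : ℝ × ℝ} (hK : K ∈ Kfam k j) : Dset k ch i ∩ ivSet K ⊆ ivSet (mid K) := by
  rintro x ⟨hx1, hx2⟩
  obtain ⟨K', hK', hmem⟩ := mem_iUnion₂.1 hx1
  obtain ⟨d, rfl⟩ : ∃ d, i = j + d + 1 := ⟨i - j - 1, by omega⟩
  obtain ⟨K₀, hK₀, hsub⟩ := Kfam_sub_mid hk j d K' hK'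
  have hxK' : x ∈ ivSet K' := (IJ_subset_K hk ch hK').1 hmem
  rcases eq_or_ne K₀ K with rfl | hne
  · exact hsub hxK'
  · exfalso
    have h1 : x ∈ ivSet K₀ := mid_subset (Kfam_lt hk hK₀) (hsub hxK')
    exact (eq_empty_iff_forall_notMem.1 (Kfam_disj hk hK₀ hK hne) x) ⟨h1, hx2⟩

def child (k : ℕ) (K : ℝ × ℝ) (l : ℕ) : ℝ × ℝ :=
  ((mid K).1 + (l : ℝ) * ((3 : ℝ) ^ (1 - (k : ℤ)) * len (mid K)),
   (mid K).1 + ((l : ℝ) + 1) * ((3 : ℝ) ^ (1 - (k : ℤ)) * len (mid K)))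

lemma child_mem {k : ℕ} {i : ℕ} {K : ℝ × ℝ} (hK : K ∈ Kfam k i) {l : ℕ}
    (hl : l < 3^(k-1)) : child k K l ∈ Kfam k (i+1) := ⟨K, hK, l, hl, rfl⟩

lemma child_pack {k : ℕ} (hk : 1 ≤ k) {i : ℕ} {K : ℝ × ℝ} (hK : K ∈ Kfam k i) (l : ℕ) :
    (child k K l).1 = (mid K).1 + (l:ℝ) * sc k (i+1) ∧
    (child k K l).2 = (mid K).1 + ((l:ℝ)+1) * sc k (i+1) := by
  obtain ⟨_, _, _, hml⟩ := Kfam_pack hk hK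
  have hL : (3:ℝ)^(1-(k:ℤ)) * len (mid K) = sc k (i+1) := by rw [hml]; exact IJlen hk i
  constructor <;> simp only [child, hL]

lemma Ico_biUnion (c L : ℝ) (hL : 0 ≤ L) :
    ∀ N : ℕ, (⋃ l ∈ Finset.range N, Ico (c + (l:ℝ)*L) (c + ((l:ℝ)+1)*L)) =
      Ico c (c + (N:ℝ)*L) := by
  intro N
  induction N with
  | zero => simp
  | succ N ih =>
    rw [Finset.range_add_one, Finset.set_biUnion_insert, ih, union_comm,
      Ico_union_Ico_eq_Ico (by nlinarith [Nat.cast_nonneg (α := ℝ) N]) (by push_cast; nlinarith)]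
    push_cast
    ring_nf

lemma mid_eq_union {k : ℕ} (hk : 1 ≤ k) {i : ℕ} {K : ℝ × ℝ} (hK : K ∈ Kfam k i) :
    ivSet (mid K) = ⋃ l ∈ Finset.range (3^(k-1)), ivSet (child k K l) := by
  obtain ⟨_, hm1, hm2, hml⟩ := Kfam_pack hk hK
  have hL : (3:ℝ)^(1-(k:ℤ)) * len (mid K) = sc k (i+1) := by rw [hml]; exact IJlen hk i
  have hconv : ∀ l : ℕ, ivSet (child k K l) =
      Ico ((mid K).1 + (l:ℝ) * sc k (i+1)) ((mid K).1 + ((l:ℝ)+1) * sc k (i+1)) := by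
    intro l
    obtain ⟨hc1, hc2⟩ := child_pack hk hK l
    rw [ivSet, hc1, hc2]
  rw [iUnion₂_congr (fun l _ => hconv l), Ico_biUnion _ _ (sc_pos k (i+1)).le]
  rw [ivSet, hm1, hm2]
  congr 1
  have h3 : ((3:ℝ)^(k-1)) * sc k (i+1) = sc k i / 3 := (sc_div3 hk i).symm
  push_cast
  rw [h3]
  ring

lemma child_disj {k : ℕ} (hk : 1 ≤ k) {i : ℕ} {K : ℝ × ℝ} (hK : K ∈ Kfam k i)
    {l l' : ℕ} (hne : l ≠ l') : ivSet (child k K l) ∩ ivSet (child k K l') = ∅ := by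
  obtain ⟨hc1, hc2⟩ := child_pack hk hK l
  obtain ⟨hc1', hc2'⟩ := child_pack hk hK l'
  have hsc := sc_pos k (i+1)
  apply eq_empty_iff_forall_notMem.2
  rintro x ⟨⟨ha1, ha2⟩, ⟨hb1, hb2⟩⟩
  rw [hc1] at ha1; rw [hc2] at ha2; rw [hc1'] at hb1; rw [hc2'] at hb2
  rcases Nat.lt_or_ge l l' with h | h
  · have : (l:ℝ) + 1 ≤ (l':ℝ) := by exact_mod_cast h
    nlinarith
  · have hlt : l' < l := by omega
    have : (l':ℝ) + 1 ≤ (l:ℝ) := by exact_mod_cast hlt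
    nlinarith

/-- volume of the intersection of deeper supports with a member -/
lemma vol_Dset {k : ℕ} (hk : 1 ≤ k) (ch : ℝ × ℝ → Bool) :
    ∀ d : ℕ, ∀ j : ℕ, ∀ K ∈ Kfam k j,
      volume (Dset k ch (j + d) ∩ ivSet K) =
        ENNReal.ofReal (sc k (j+1) * (3:ℝ)^(-(d:ℤ))) := by
  intro d
  induction d with
  | zero =>
    intro j K hK
    rw [Nat.add_zero, Dset_inter_eq hk ch hK]
    obtain ⟨hij2, _⟩ := IJ_pack hk ch hK
    rw [ivSet, Real.volume_Ico, hij2]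
    norm_num
  | succ d ih =>
    intro j K hK
    have hsplit : Dset k ch (j + (d+1)) ∩ ivSet K =
        ⋃ l ∈ Finset.range (3^(k-1)), (Dset k ch (j + (d+1)) ∩ ivSet (child k K l)) := by
      apply Set.Subset.antisymm
      · rintro x ⟨hx1, hx2⟩
        have hxmid : x ∈ ivSet (mid K) :=
          Dset_inter_gt hk ch (by omega) hK ⟨hx1, hx2⟩
        rw [mid_eq_union hk hK] at hxmid
        obtain ⟨l, hl, hmem⟩ := mem_iUnion₂.1 hxmid
        exact mem_iUnion₂.2 ⟨l, hl, hx1, hmem⟩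
      · rintro x hx
        obtain ⟨l, hl, hx1, hx2⟩ := mem_iUnion₂.1 hx
        refine ⟨hx1, mid_subset (Kfam_lt hk hK) ?_⟩
        rw [mid_eq_union hk hK]
        exact mem_iUnion₂.2 ⟨l, hl, hx2⟩
    have hdisj : (↑(Finset.range (3^(k-1))) : Set ℕ).PairwiseDisjoint
        (fun l => Dset k ch (j + (d+1)) ∩ ivSet (child k K l)) := by
      intro l hl l' hl' hne
      simp only [Function.onFun]
      apply Set.disjoint_iff_inter_eq_empty.2
      apply eq_empty_of_subset_empty
      rw [← child_disj hk hK hne]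
      exact fun x ⟨⟨_, h1⟩, ⟨_, h2⟩⟩ => ⟨h1, h2⟩
    rw [hsplit, measure_biUnion_finset hdisj
      (fun l _ => (Dset_meas ch _).inter measurableSet_Ico)]
    · have hval : ∀ l ∈ Finset.range (3^(k-1)),
          volume (Dset k ch (j + (d+1)) ∩ ivSet (child k K l)) =
            ENNReal.ofReal (sc k (j+2) * (3:ℝ)^(-(d:ℤ))) := by
        intro l hl
        have : j + (d + 1) = (j+1) + d := by omega
        rw [this]
        exact ih (j+1) _ (child_mem hK (Finset.mem_range.1 hl))
      rw [Finset.sum_congr rfl hval, Finset.sum_const, Finset.card_range, nsmul_eq_mul]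
      rw [← ENNReal.ofReal_natCast, ← ENNReal.ofReal_mul (by positivity)]
      congr 1
      have h3 : ((3:ℝ)^(k-1)) * sc k (j+2) = sc k (j+1) / 3 := (sc_div3 hk (j+1)).symm
      have h4 : (3:ℝ)^(-((d+1:ℕ):ℤ)) = (3:ℝ)^(-(d:ℤ)) / 3 := by
        rw [show (-((d+1:ℕ):ℤ)) = -(d:ℤ) + (-1) by push_cast; ring, zpow_add₀ three_ne]
        simp [zpow_neg]
        ring
      rw [h4, show ((3^(k-1):ℕ):ℝ) = (3:ℝ)^(k-1) by push_cast; ring]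
      linear_combination ((3:ℝ)^(-(d:ℤ))) * h3

end RTaux
namespace RTaux
open RTpaper Set MeasureTheory

/-- the geometric series over levels, against a member `K` -/
lemma lint_series {k : ℕ} (hk : 1 ≤ k) (ch : ℝ × ℝ → Bool) {r : ℝ} (hr0 : 0 < r)
    (hr3 : r < 3) {j : ℕ} {K : ℝ × ℝ} (hK : K ∈ Kfam k j) :
    (∑' i : ℕ, ENNReal.ofReal (r^(i+1)) * volume (Dset k ch i ∩ ivSet K)) =
      ENNReal.ofReal (r^(j+1) * sc k (j+1) * (1 - r/3)⁻¹) := by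
  set f : ℕ → ENNReal := fun i => ENNReal.ofReal (r^(i+1)) * volume (Dset k ch i ∩ ivSet K)
    with hf
  have hzero : ∀ i < j, f i = 0 := by
    intro i hij
    simp only [hf, Dset_inter_lt hk ch hij hK, measure_empty, mul_zero]
  have hshift : ∑' i, f i = ∑' d, f (d + j) := by
    refine (Function.Injective.tsum_eq (add_left_injective j) ?_).symm
    intro i hi
    rcases Nat.lt_or_ge i j with h | h
    · exact absurd (hzero i h) hi
    · exact ⟨i - j, by show i - j + j = i; omega⟩
  have hval : ∀ d : ℕ, f (d + j) =
      ENNReal.ofReal ((r^(j+1) * sc k (j+1)) * (r/3)^d) := by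
    intro d
    have hv : volume (Dset k ch (d + j) ∩ ivSet K) =
        ENNReal.ofReal (sc k (j+1) * (3:ℝ)^(-(d:ℤ))) := by
      rw [show d + j = j + d by omega]
      exact vol_Dset hk ch d j K hK
    simp only [hf, hv]
    rw [← ENNReal.ofReal_mul (pow_nonneg hr0.le _)]
    congr 1
    rw [div_pow, zpow_neg, zpow_natCast, pow_add]
    have h3d : ((3:ℝ)^d) ≠ 0 := pow_ne_zero _ three_ne
    field_simp
    ring
  have hr30 : (0:ℝ) ≤ r/3 := div_nonneg hr0.le (by norm_num)
  have hr31 : r/3 < 1 := by linarith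
  rw [hshift, tsum_congr hval,
    ← ENNReal.ofReal_tsum_of_nonneg
      (fun d => mul_nonneg (mul_nonneg (pow_nonneg hr0.le _) (sc_pos k (j+1)).le)
        (pow_nonneg hr30 d))
      ((summable_geometric_of_lt_one hr30 hr31).mul_left _),
    tsum_mul_left, tsum_geometric_of_lt_one hr30 hr31]

lemma aK_series_id {k : ℕ} (hk : 1 ≤ k) (j : ℕ) :
    (aK k)^(j+1) * sc k (j+1) * (1 - aK k/3)⁻¹ = (aK k)^j * sc k j := by
  have hD := aK_den_pos k
  have h1 : 1 - aK k / 3 = ((3:ℝ)^(k-1)+1)⁻¹ := by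
    rw [aK, pow_pred hk]
    field_simp
    ring
  rw [h1, inv_inv, sc_succ k j, pow_succ]
  linear_combination (aK k)^j * sc k (j+1) * aK_mul k

def cK (p : ℝ) (k : ℕ) : ℝ := bK p k * sc k 1 * 3 / (3 - bK p k)

lemma bK_series_id {p : ℝ} (hp : 1 < p) {k : ℕ} (hk : 1 ≤ k) (j : ℕ) :
    (bK p k)^(j+1) * sc k (j+1) * (1 - bK p k/3)⁻¹ = cK p k * ((bK p k)^j * sc k j) := by
  have hb1 : bK p k < 1 := bK_lt_one hp hk
  have hb0 : 0 < bK p k := bK_pos p k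
  have h3b : (3:ℝ) - bK p k ≠ 0 := by linarith
  have hsc : sc k (j+1) = sc k j * sc k 1 := by
    unfold sc
    rw [← zpow_add₀ three_ne]
    congr 1
    push_cast [Nat.succ_mul]
    ring
  rw [cK, hsc, pow_succ]
  have h13 : (1:ℝ) - bK p k / 3 = (3 - bK p k)/3 := by ring
  rw [h13]
  field_simp

lemma Wf_meas {k : ℕ} (ch : ℝ × ℝ → Bool) : Measurable (Wf k ch) :=
  Measurable.ennreal_tsum (fun i => measurable_const.indicator (Dset_meas ch i))

lemma Vf_meas {p : ℝ} {k : ℕ} (ch : ℝ × ℝ → Bool) : Measurable (Vf p k ch) :=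
  Measurable.ennreal_tsum (fun i => measurable_const.indicator (Dset_meas ch i))

lemma wgt_meas {k : ℕ} (hk : 1 ≤ k) (ch : ℝ × ℝ → Bool) : Measurable (wgt k ch) := by
  have h : wgt k ch = fun x => (Wf k ch x).toReal :=
    funext (fun x => by rw [← ofReal_wgt hk ch x, ENNReal.toReal_ofReal (wgt_nonneg hk ch x)])
  rw [h]
  exact (Wf_meas ch).ennreal_toReal

lemma sgm_meas {p : ℝ} {k : ℕ} (hk : 1 ≤ k) (ch : ℝ × ℝ → Bool) :
    Measurable (sgm p k ch) := by
  have h : sgm p k ch = fun x => (Vf p k ch x).toReal :=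
    funext (fun x => by rw [← ofReal_sgm hk ch x, ENNReal.toReal_ofReal (sgm_nonneg hk ch x)])
  rw [h]
  exact (Vf_meas ch).ennreal_toReal

lemma mass_eq_W {k : ℕ} (hk : 1 ≤ k) (ch : ℝ × ℝ → Bool) (A : Set ℝ) :
    (∫ x in A, wgt k ch x) = (∫⁻ x in A, Wf k ch x).toReal := by
  rw [integral_eq_lintegral_of_nonneg_ae (Filter.Eventually.of_forall (wgt_nonneg hk ch))
    ((wgt_meas hk ch).aestronglyMeasurable)]
  congr 1
  exact lintegral_congr (fun x => ofReal_wgt hk ch x)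

lemma mass_eq_V {p : ℝ} {k : ℕ} (hk : 1 ≤ k) (ch : ℝ × ℝ → Bool) (A : Set ℝ) :
    (∫ x in A, sgm p k ch x) = (∫⁻ x in A, Vf p k ch x).toReal := by
  rw [integral_eq_lintegral_of_nonneg_ae (Filter.Eventually.of_forall (sgm_nonneg hk ch))
    ((sgm_meas hk ch).aestronglyMeasurable)]
  congr 1
  exact lintegral_congr (fun x => ofReal_sgm hk ch x)

/-- mass of `wgt` on a level-`j` member -/
lemma mass_W_K {k : ℕ} (hk : 1 ≤ k) (ch : ℝ × ℝ → Bool) {j : ℕ} {K : ℝ × ℝ}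
    (hK : K ∈ Kfam k j) : mass (wgt k ch) K = (aK k)^j * sc k j := by
  unfold mass
  rw [mass_eq_W hk ch]
  unfold Wf
  rw [lint_layer, lint_series hk ch (aK_pos k) (aK_lt_three hk) hK, aK_series_id hk j,
    ENNReal.toReal_ofReal (mul_nonneg (pow_nonneg (aK_pos k).le j) (sc_pos k j).le)]

/-- mass of `sgm` on a level-`j` member -/
lemma mass_V_K {p : ℝ} (hp : 1 < p) {k : ℕ} (hk : 1 ≤ k) (ch : ℝ × ℝ → Bool) {j : ℕ}
    {K : ℝ × ℝ} (hK : K ∈ Kfam k j) :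
    mass (sgm p k ch) K = cK p k * ((bK p k)^j * sc k j) := by
  unfold mass
  rw [mass_eq_V hk ch]
  unfold Vf
  have hb0 := bK_pos p k
  have h1 : 0 < cK p k := by
    rw [cK]
    have h2 := sc_pos k 1
    have h3 : (0:ℝ) < 3 - bK p k := by linarith [bK_lt_one hp hk]
    exact div_pos (mul_pos (mul_pos hb0 h2) (by norm_num)) h3
  rw [lint_layer, lint_series hk ch (bK_pos p k) (by linarith [bK_lt_one hp hk]) hK,
    bK_series_id hp hk j, ENNReal.toReal_ofReal
      (mul_nonneg h1.le (mul_nonneg (pow_nonneg hb0.le j) (sc_pos k j).le))]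

/-- the level sum against a set avoiding the middle third -/
lemma lint_sub {k : ℕ} (hk : 1 ≤ k) (ch : ℝ × ℝ → Bool) (c : ℕ → ℝ) {j : ℕ}
    {K : ℝ × ℝ} (hK : K ∈ Kfam k j) {A : Set ℝ} (hA1 : A ⊆ ivSet K)
    (hA2 : A ∩ ivSet (mid K) = ∅) :
    (∑' i : ℕ, ENNReal.ofReal (c i) * volume (Dset k ch i ∩ A)) =
      ENNReal.ofReal (c j) * volume (ivSet (IJ k ch (mid K)) ∩ A) := by
  rw [tsum_eq_single j ?_]
  · congr 2
    apply Set.Subset.antisymm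
    · rintro x ⟨hx1, hx2⟩
      have : x ∈ Dset k ch j ∩ ivSet K := ⟨hx1, hA1 hx2⟩
      rw [Dset_inter_eq hk ch hK] at this
      exact ⟨this, hx2⟩
    · rintro x ⟨hx1, hx2⟩
      have : x ∈ Dset k ch j ∩ ivSet K := by
        rw [Dset_inter_eq hk ch hK]; exact hx1
      exact ⟨this.1, hx2⟩
  · intro i hne
    rcases Nat.lt_or_ge i j with h | h
    · have : Dset k ch i ∩ A = ∅ := by
        apply eq_empty_of_subset_empty
        rw [← Dset_inter_lt hk ch h hK]
        exact fun x ⟨h1, h2⟩ => ⟨h1, hA1 h2⟩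
      rw [this, measure_empty, mul_zero]
    · have hij : j < i := by omega
      have : Dset k ch i ∩ A = ∅ := by
        apply eq_empty_of_subset_empty
        rw [← hA2]
        exact fun x ⟨h1, h2⟩ => ⟨h2, Dset_inter_gt hk ch hij hK ⟨h1, hA1 h2⟩⟩
      rw [this, measure_empty, mul_zero]

/-- masses on an interval of the `𝒮²` chain -/
lemma mass_chain {p : ℝ} (hp : 1 < p) {k : ℕ} (hk : 1 ≤ k) (ch : ℝ × ℝ → Bool) {j : ℕ}
    {K : ℝ × ℝ} (hK : K ∈ Kfam k j) {I : ℝ × ℝ} (hsub : ivSet I ⊆ ivSet K)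
    (hmid : ivSet I ∩ ivSet (mid K) = ∅)
    (hIJ : ivSet (IJ k ch (mid K)) ⊆ ivSet I) :
    mass (wgt k ch) I = (aK k)^(j+1) * sc k (j+1) ∧
    mass (sgm p k ch) I = (bK p k)^(j+1) * sc k (j+1) := by
  have hvol : volume (ivSet (IJ k ch (mid K)) ∩ ivSet I) = ENNReal.ofReal (sc k (j+1)) := by
    rw [Set.inter_eq_self_of_subset_left hIJ]
    obtain ⟨hij2, _⟩ := IJ_pack hk ch hK
    rw [ivSet, Real.volume_Ico, hij2]
    norm_num
  constructor
  · unfold mass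
    rw [mass_eq_W hk ch]
    unfold Wf
    rw [lint_layer, lint_sub hk ch _ hK hsub hmid, hvol,
      ← ENNReal.ofReal_mul (pow_nonneg (aK_pos k).le _),
      ENNReal.toReal_ofReal (mul_nonneg (pow_nonneg (aK_pos k).le _) (sc_pos k (j+1)).le)]
  · unfold mass
    rw [mass_eq_V hk ch]
    unfold Vf
    rw [lint_layer, lint_sub hk ch _ hK hsub hmid, hvol,
      ← ENNReal.ofReal_mul (pow_nonneg (bK_pos p k).le _),
      ENNReal.toReal_ofReal (mul_nonneg (pow_nonneg (bK_pos p k).le _) (sc_pos k (j+1)).le)]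

end RTaux
namespace RTaux
open RTpaper Set MeasureTheory

lemma len_pos {I : ℝ × ℝ} (h : I.1 < I.2) : 0 < len I := sub_pos.2 h

lemma pair_eq_of_ivSet_eq {I J : ℝ × ℝ} (hI : I.1 < I.2) (h : ivSet I = ivSet J) : I = J := by
  obtain ⟨h1, h2⟩ := (Set.Ico_eq_Ico_iff (Or.inl hI)).1 h
  exact Prod.ext h1 h2

lemma subset_ends {I J : ℝ × ℝ} (hI : I.1 < I.2) (h : ivSet I ⊆ ivSet J) :
    J.1 ≤ I.1 ∧ I.2 ≤ J.2 := (Set.Ico_subset_Ico_iff hI).1 h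

lemma ivSet_eq_of_len_le {I J : ℝ × ℝ} (hI : I.1 < I.2) (hsub : ivSet I ⊆ ivSet J)
    (hlen : len J ≤ len I) : ivSet J = ivSet I := by
  obtain ⟨h1, h2⟩ := subset_ends hI hsub
  unfold RTpaper.len at hlen
  have e1 : J.1 = I.1 := by linarith
  have e2 : J.2 = I.2 := by linarith
  rw [ivSet, ivSet, e1, e2]

lemma mem_scale {I : ℝ × ℝ} (htr : IsTriadic I) (hsub : ivSet I ⊆ Set.Ico (0:ℝ) 1) :
    ∃ n : ℕ, len I = (3:ℝ)^(-(n:ℤ)) ∧ I.1 < I.2 := by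
  obtain ⟨n, j, h1, h2⟩ := htr
  have hpos : (0:ℝ) < (3:ℝ)^(-n) := zpow_pos three_pos _
  have hlt : I.1 < I.2 := by rw [h1, h2]; nlinarith
  have hlen : len I = (3:ℝ)^(-n) := by rw [RTpaper.len, h1, h2]; ring
  obtain ⟨hI1, hI2⟩ := (Set.Ico_subset_Ico_iff hlt).1 hsub
  have hle : (3:ℝ)^(-n) ≤ 1 := by rw [← hlen]; unfold RTpaper.len; linarith
  have hn : 0 ≤ n := by
    by_contra hc
    push_neg at hc
    have h01 : (0:ℤ) < -n := by omega
    have := (zpow_right_strictMono₀ (show (1:ℝ) < 3 by norm_num)) h01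
    simp only [zpow_zero] at this
    linarith
  exact ⟨n.toNat, by rw [hlen]; congr 1; omega, hlt⟩

lemma sum_len_le {F : Finset (ℝ × ℝ)}
    (hdisj : ∀ I ∈ F, ∀ J ∈ F, I ≠ J → ivSet I ∩ ivSet J = ∅)
    {a b : ℝ} (hab : a ≤ b) (hsub : ∀ I ∈ F, ivSet I ⊆ Set.Ico a b)
    (hpos : ∀ I ∈ F, 0 ≤ len I) :
    ∑ I ∈ F, len I ≤ b - a := by
  have hmeas : volume (⋃ I ∈ F, ivSet I) = ∑ I ∈ F, volume (ivSet I) :=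
    measure_biUnion_finset
      (fun I hI J hJ hne => Set.disjoint_iff_inter_eq_empty.2 (hdisj I hI J hJ hne))
      (fun I _ => measurableSet_Ico)
  have h1 : ∑ I ∈ F, volume (ivSet I) ≤ ENNReal.ofReal (b - a) := by
    rw [← hmeas]
    calc volume (⋃ I ∈ F, ivSet I) ≤ volume (Set.Ico a b) :=
          measure_mono (Set.iUnion₂_subset hsub)
      _ = ENNReal.ofReal (b - a) := Real.volume_Ico
  have h2 : ∑ I ∈ F, volume (ivSet I) = ENNReal.ofReal (∑ I ∈ F, len I) := by
    rw [ENNReal.ofReal_sum_of_nonneg hpos]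
    apply Finset.sum_congr rfl
    intro I _
    rw [ivSet, Real.volume_Ico, RTpaper.len]
  rw [h2] at h1
  exact (ENNReal.ofReal_le_ofReal_iff (by linarith)).1 h1

lemma maxIn_pairwise {ε : ℝ} {S : Set (ℝ × ℝ)} (hS : MSparse ε S) {R : ℝ × ℝ} :
    ∀ Q ∈ maxIn S R, ∀ Q' ∈ maxIn S R, Q ≠ Q' → ivSet Q ∩ ivSet Q' = ∅ := by
  rintro Q ⟨hQS, hQR, hQmax⟩ Q' ⟨hQ'S, hQ'R, hQ'max⟩ hne
  rcases hS.2.2.1 Q hQS Q' hQ'S with h | h | h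
  · have heq := hQmax Q' hQ'S h hQ'R
    exact absurd (pair_eq_of_ivSet_eq (hS.2.1 Q' hQ'S) heq) (Ne.symm hne)
  · have heq := hQ'max Q hQS h hQR
    exact absurd (pair_eq_of_ivSet_eq (hS.2.1 Q hQS) heq) hne
  · exact h

lemma maxIn_sum {ε : ℝ} (hε0 : 0 ≤ ε) {S : Set (ℝ × ℝ)} (hS : MSparse ε S) {R : ℝ × ℝ}
    (hR : R ∈ S) :
    ∀ G : Finset (ℝ × ℝ), ↑G ⊆ maxIn S R → ∑ Q ∈ G, len Q ≤ ε * len R := by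
  have hlenR : R.1 < R.2 := hS.2.1 R hR
  have hfin : ∀ u : Finset ↥(maxIn S R), ∑ q ∈ u, len (q : ℝ × ℝ) ≤ len R := by
    intro u
    have hinj : ∀ x ∈ u, ∀ y ∈ u, (x : ℝ × ℝ) = (y : ℝ × ℝ) → x = y :=
      fun x _ y _ h => Subtype.ext h
    rw [← Finset.sum_image hinj]
    have := sum_len_le (F := u.image (Subtype.val))
      (fun I hI J hJ hne => by
        obtain ⟨qI, _, rfl⟩ := Finset.mem_image.1 hI
        obtain ⟨qJ, _, rfl⟩ := Finset.mem_image.1 hJ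
        exact maxIn_pairwise hS _ qI.2 _ qJ.2 hne)
      (le_of_lt hlenR)
      (fun I hI => by
        obtain ⟨qI, _, rfl⟩ := Finset.mem_image.1 hI
        exact (qI.2.2.1).1)
      (fun I hI => by
        obtain ⟨qI, _, rfl⟩ := Finset.mem_image.1 hI
        exact (len_pos (hS.2.1 _ qI.2.1)).le)
    calc ∑ I ∈ u.image (Subtype.val), len I ≤ R.2 - R.1 := this
      _ = len R := rfl
  have hsummable : Summable (fun Q : ↥(maxIn S R) => len (Q : ℝ × ℝ)) :=
    summable_of_sum_le (fun Q => (len_pos (hS.2.1 _ Q.2.1)).le) hfin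
  intro G hG
  have hmap : ∑ Q ∈ G, len Q = ∑ q ∈ G.attach, len ((⟨q.1, hG q.2⟩ : ↥(maxIn S R)) : ℝ × ℝ) := by
    rw [Finset.sum_attach G (fun x => len x)]
  rw [hmap]
  have hinj2 : Function.Injective (fun q : {x // x ∈ G} => (⟨q.1, hG q.2⟩ : ↥(maxIn S R))) := by
    intro x y h
    simp only [Subtype.mk.injEq] at h
    exact Subtype.ext h
  calc (∑ q ∈ G.attach, len ((⟨q.1, hG q.2⟩ : ↥(maxIn S R)) : ℝ × ℝ))
      = ∑ q ∈ G.attach.image (fun q : {x // x ∈ G} => (⟨q.1, hG q.2⟩ : ↥(maxIn S R))),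
          len (q : ℝ × ℝ) := by
        rw [Finset.sum_image (fun x _ y _ h => hinj2 h)]
    _ ≤ ∑' Q : ↥(maxIn S R), len (Q : ℝ × ℝ) :=
        Summable.sum_le_tsum _ (fun q _ => (len_pos (hS.2.1 _ q.2.1)).le) hsummable
    _ ≤ ε * len R := hS.2.2.2 R hR

/-- existence of maximal members above a given member (uses triadicity) -/
lemma exists_maxIn {ε : ℝ} {S : Set (ℝ × ℝ)} (hS : MSparse ε S)
    (htri : ∀ I ∈ S, IsTriadic I ∧ ivSet I ⊆ Set.Ico (0:ℝ) 1)
    {Q R : ℝ × ℝ} (hQ : Q ∈ S) (hQR : ivSet Q ⊂ ivSet R) :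
    ∃ Q' ∈ maxIn S R, ivSet Q ⊆ ivSet Q' := by
  classical
  have hex : ∃ n : ℕ, ∃ Q' ∈ S, ivSet Q ⊆ ivSet Q' ∧ ivSet Q' ⊂ ivSet R ∧
      len Q' = (3:ℝ)^(-(n:ℤ)) := by
    obtain ⟨n, hn, _⟩ := mem_scale (htri Q hQ).1 (htri Q hQ).2
    exact ⟨n, Q, hQ, subset_rfl, hQR, hn⟩
  obtain ⟨Q', hQ'S, hQQ', hQ'R, hlenQ'⟩ := Nat.find_spec hex
  refine ⟨Q', ⟨hQ'S, hQ'R, ?_⟩, hQQ'⟩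
  intro Q'' hQ''S hsub hQ''R
  obtain ⟨m, hm, _⟩ := mem_scale (htri Q'' hQ''S).1 (htri Q'' hQ''S).2
  have hle : Nat.find hex ≤ m :=
    Nat.find_min' hex ⟨Q'', hQ''S, hQQ'.trans hsub, hQ''R, hm⟩
  have h1 : len Q'' ≤ len Q' := by
    rw [hm, hlenQ']
    exact (zpow_right_strictMono₀ (show (1:ℝ) < 3 by norm_num)).monotone (by omega)
  exact ivSet_eq_of_len_le (hS.2.1 Q' hQ'S) hsub h1

/-- the finite Carleson-type packing estimate for martingale sparse families -/
lemma sparse_finsum {ε : ℝ} (hε1 : ε < 1) (hε0 : 0 ≤ ε) {S : Set (ℝ × ℝ)}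
    (hS : MSparse ε S) (htri : ∀ I ∈ S, IsTriadic I ∧ ivSet I ⊆ Set.Ico (0:ℝ) 1) :
    ∀ n : ℕ, ∀ F : Finset (ℝ × ℝ), F.card ≤ n → ↑F ⊆ S →
      ∀ a b : ℝ, a ≤ b → (∀ I ∈ F, ivSet I ⊆ Set.Ico a b) →
      (1 - ε) * (∑ I ∈ F, len I) ≤ b - a := by
  classical
  intro n
  induction n with
  | zero =>
    intro F hcard _ a b hab _
    have : F = ∅ := Finset.card_eq_zero.1 (by omega)
    rw [this]
    simp
    linarith
  | succ n ih =>
    intro F hcard hFS a b hab hFab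
    have hpos : ∀ I ∈ F, I.1 < I.2 := fun I hI => hS.2.1 I (hFS hI)
    -- maximal members
    set M := F.filter (fun I => ∀ J ∈ F, ivSet I ⊆ ivSet J → ivSet J = ivSet I) with hM
    have hMcover : ∀ I ∈ F, ∃ R ∈ M, ivSet I ⊆ ivSet R := by
      intro I hI
      set T := F.filter (fun J => ivSet I ⊆ ivSet J) with hT
      have hTne : T.Nonempty := ⟨I, Finset.mem_filter.2 ⟨hI, subset_rfl⟩⟩
      obtain ⟨R, hRT, hRmax⟩ := Finset.exists_max_image T len hTne
      obtain ⟨hRF, hIR⟩ := Finset.mem_filter.1 hRT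
      refine ⟨R, Finset.mem_filter.2 ⟨hRF, ?_⟩, hIR⟩
      intro J hJ hRJ
      have hJT : J ∈ T := Finset.mem_filter.2 ⟨hJ, hIR.trans hRJ⟩
      exact ivSet_eq_of_len_le (hpos R hRF) hRJ (hRmax J hJT)
    have hMdisj : ∀ R ∈ M, ∀ R' ∈ M, R ≠ R' → ivSet R ∩ ivSet R' = ∅ := by
      intro R hR R' hR' hne
      obtain ⟨hRF, hRmax⟩ := Finset.mem_filter.1 hR
      obtain ⟨hR'F, hR'max⟩ := Finset.mem_filter.1 hR'
      rcases hS.2.2.1 R (hFS hRF) R' (hFS hR'F) with h | h | h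
      · exact absurd (pair_eq_of_ivSet_eq (hpos R' hR'F) (hRmax R' hR'F h)) (Ne.symm hne)
      · exact absurd (pair_eq_of_ivSet_eq (hpos R hRF) (hR'max R hRF h)) hne
      · exact h
    -- group by maximal members
    have hcover2 : F ⊆ M.biUnion (fun R => F.filter (fun I => ivSet I ⊆ ivSet R)) := by
      intro I hI
      obtain ⟨R, hRM, hIR⟩ := hMcover I hI
      exact Finset.mem_biUnion.2 ⟨R, hRM, Finset.mem_filter.2 ⟨hI, hIR⟩⟩
    have hfibdisj : (↑M : Set (ℝ × ℝ)).PairwiseDisjoint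
        (fun R => F.filter (fun I => ivSet I ⊆ ivSet R)) := by
      intro R hR R' hR' hne
      simp only [Function.onFun]
      rw [Finset.disjoint_left]
      intro I hI hI'
      obtain ⟨hIF, h1⟩ := Finset.mem_filter.1 hI
      obtain ⟨_, h2⟩ := Finset.mem_filter.1 hI'
      have hne' : (ivSet I).Nonempty := Set.nonempty_Ico.2 (hpos I hIF)
      obtain ⟨x, hx⟩ := hne'
      exact (eq_empty_iff_forall_notMem.1
        (hMdisj R (Finset.mem_coe.1 hR) R' (Finset.mem_coe.1 hR') hne) x) ⟨h1 hx, h2 hx⟩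
    have hstep : ∀ R ∈ M,
        (1 - ε) * (∑ I ∈ F.filter (fun I => ivSet I ⊆ ivSet R), len I) ≤ len R := by
      intro R hRM
      obtain ⟨hRF, hRmax⟩ := Finset.mem_filter.1 hRM
      set H := (F.filter (fun I => ivSet I ⊆ ivSet R)).erase R with hH
      have hRmem : R ∈ F.filter (fun I => ivSet I ⊆ ivSet R) :=
        Finset.mem_filter.2 ⟨hRF, subset_rfl⟩
      have hsplit : ∑ I ∈ F.filter (fun I => ivSet I ⊆ ivSet R), len I =
          len R + ∑ I ∈ H, len I := (Finset.add_sum_erase _ len hRmem).symm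
      -- every member of H has a maximal envelope
      have hchoice : ∀ I ∈ H, ∃ Q, Q ∈ maxIn S R ∧ ivSet I ⊆ ivSet Q := by
        intro I hI
        have hIne := Finset.ne_of_mem_erase hI
        obtain ⟨hIF, hIR⟩ := Finset.mem_filter.1 (Finset.mem_of_mem_erase hI)
        have hssub : ivSet I ⊂ ivSet R := by
          refine lt_of_le_of_ne hIR ?_
          intro heq
          exact hIne (pair_eq_of_ivSet_eq (hpos I hIF) heq)
        obtain ⟨Q, hQ1, hQ2⟩ := exists_maxIn hS htri (hFS hIF) hssub
        exact ⟨Q, hQ1, hQ2⟩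
      choose! f hf1 hf2 using hchoice
      set G := H.image f with hG
      have hGsub : ↑G ⊆ maxIn S R := by
        intro Q hQ
        obtain ⟨I, hI, rfl⟩ := Finset.mem_image.1 hQ
        exact hf1 I hI
      have hfib : ∑ Q ∈ G, ∑ I ∈ H.filter (fun I => f I = Q), len I = ∑ I ∈ H, len I :=
        Finset.sum_fiberwise_of_maps_to (fun I hI => Finset.mem_image_of_mem f hI) len
      have hfibbound : ∀ Q ∈ G,
          (1 - ε) * (∑ I ∈ H.filter (fun I => f I = Q), len I) ≤ len Q := by
        intro Q hQ
        have hQmax : Q ∈ maxIn S R := hGsub hQ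
        have hQlt : Q.1 < Q.2 := hS.2.1 Q hQmax.1
        refine ih (H.filter (fun I => f I = Q)) ?_ ?_ Q.1 Q.2 hQlt.le ?_
        · have h1 : (H.filter (fun I => f I = Q)).card ≤ H.card := Finset.card_filter_le _ _
          have h2 : H.card = (F.filter (fun I => ivSet I ⊆ ivSet R)).card - 1 :=
            Finset.card_erase_of_mem hRmem
          have h3 := Finset.card_filter_le F (fun I => ivSet I ⊆ ivSet R)
          omega
        · intro I hI
          have hI' : I ∈ H.filter (fun I => f I = Q) := Finset.mem_coe.1 hI
          have hIH : I ∈ H := Finset.mem_of_mem_filter _ hI'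
          have hIF : I ∈ F :=
            Finset.mem_of_mem_filter _ (Finset.mem_of_mem_erase hIH)
          exact hFS hIF
        · intro I hI
          obtain ⟨hIH, hfI⟩ := Finset.mem_filter.1 hI
          have h := hf2 I hIH
          rw [hfI] at h
          exact h
      have hHbound : (1 - ε) * (∑ I ∈ H, len I) ≤ ε * len R := by
        calc (1 - ε) * (∑ I ∈ H, len I)
            = ∑ Q ∈ G, (1 - ε) * ∑ I ∈ H.filter (fun I => f I = Q), len I := by
              rw [← hfib, Finset.mul_sum]
          _ ≤ ∑ Q ∈ G, len Q := Finset.sum_le_sum hfibbound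
          _ ≤ ε * len R := maxIn_sum hε0 hS (hFS hRF) G hGsub
      rw [hsplit]
      have hlenR : 0 ≤ len R := (len_pos (hpos R hRF)).le
      nlinarith [hHbound, hlenR]
    -- conclude
    have hposB : ∀ I ∈ M.biUnion (fun R => F.filter (fun I => ivSet I ⊆ ivSet R)), 0 ≤ len I := by
      intro I hI
      obtain ⟨R, _, hIR⟩ := Finset.mem_biUnion.1 hI
      exact (len_pos (hpos I (Finset.mem_of_mem_filter _ hIR))).le
    calc (1 - ε) * (∑ I ∈ F, len I)
        ≤ (1 - ε) * ∑ I ∈ M.biUnion (fun R => F.filter (fun I => ivSet I ⊆ ivSet R)), len I := by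
          apply mul_le_mul_of_nonneg_left
            (Finset.sum_le_sum_of_subset_of_nonneg hcover2 (fun I hI _ => hposB I hI))
            (by linarith)
      _ = (1 - ε) * ∑ R ∈ M, ∑ I ∈ F.filter (fun I => ivSet I ⊆ ivSet R), len I := by
          rw [Finset.sum_biUnion hfibdisj]
      _ = ∑ R ∈ M, (1 - ε) * ∑ I ∈ F.filter (fun I => ivSet I ⊆ ivSet R), len I := by
          rw [Finset.mul_sum]
      _ ≤ ∑ R ∈ M, len R := Finset.sum_le_sum hstep
      _ ≤ b - a := by
          apply sum_len_le hMdisj hab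
          · intro I hI
            exact hFab I (Finset.mem_of_mem_filter _ hI)
          · intro I hI
            exact (len_pos (hpos I (Finset.mem_of_mem_filter _ hI))).le

end RTaux
namespace RTaux
open RTpaper Set MeasureTheory

lemma sc_one {k : ℕ} : sc k 1 = (3:ℝ)^(-(k:ℤ)) := by unfold sc; norm_num

lemma lint_W_K {k : ℕ} (hk : 1 ≤ k) (ch : ℝ × ℝ → Bool) {j : ℕ} {K : ℝ × ℝ}
    (hK : K ∈ Kfam k j) :
    ∫⁻ x in ivSet K, Wf k ch x = ENNReal.ofReal ((aK k)^j * sc k j) := by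
  unfold Wf
  rw [lint_layer, lint_series hk ch (aK_pos k) (aK_lt_three hk) hK, aK_series_id hk j]

lemma lint_V_K {p : ℝ} (hp : 1 < p) {k : ℕ} (hk : 1 ≤ k) (ch : ℝ × ℝ → Bool) {j : ℕ}
    {K : ℝ × ℝ} (hK : K ∈ Kfam k j) :
    ∫⁻ x in ivSet K, Vf p k ch x = ENNReal.ofReal (cK p k * ((bK p k)^j * sc k j)) := by
  unfold Vf
  rw [lint_layer, lint_series hk ch (bK_pos p k) (by linarith [bK_lt_one hp hk]) hK,
    bK_series_id hp hk j]

lemma rpow_nat_comm {x : ℝ} (hx : 0 ≤ x) (q : ℝ) (m : ℕ) : ((x^m : ℝ)) ^ q = (x ^ q)^m := by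
  rw [← Real.rpow_natCast x m, ← Real.rpow_mul hx, mul_comm, Real.rpow_mul hx,
    Real.rpow_natCast]

/-- `(A^m)^p ⋅ B^m = A^m` -/
lemma idA {p : ℝ} {k : ℕ} (m : ℕ) :
    ((aK k)^m : ℝ) ^ p * (bK p k)^m = (aK k)^m := by
  rw [rpow_nat_comm (aK_pos k).le p m, bK, ← mul_pow, ← Real.rpow_add (aK_pos k)]
  norm_num

/-- `(B^m)^{p'} ⋅ A^m = B^m` -/
lemma idB {p : ℝ} (hp : 1 < p) {k : ℕ} (m : ℕ) :
    ((bK p k)^m : ℝ) ^ (p/(p-1)) * (aK k)^m = (bK p k)^m := by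
  have hp1 : p - 1 ≠ 0 := by intro h; exact absurd (by linarith : p = 1) (by linarith)
  rw [rpow_nat_comm (bK_pos p k).le _ m, ← mul_pow]
  congr 1
  rw [bK, ← Real.rpow_mul (aK_pos k).le]
  have he : (1-p) * (p/(p-1)) = -p := by field_simp; ring
  rw [he]
  nth_rewrite 2 [show aK k = aK k ^ (1:ℝ) from (Real.rpow_one _).symm]
  rw [← Real.rpow_add (aK_pos k)]
  congr 1
  ring

lemma cK_bounds {p : ℝ} (hp : 1 < p) {k : ℕ} (hk : 1 ≤ k) :
    bK p k * sc k 1 ≤ cK p k ∧ cK p k ≤ (3/2) * sc k 1 ∧ 0 < cK p k ∧ cK p k ≤ 1 := by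
  have hb0 := bK_pos p k
  have hb1 := bK_lt_one hp hk
  have hs1 := sc_pos k 1
  have h3b : (0:ℝ) < 3 - bK p k := by linarith
  have hc0 : 0 < cK p k := div_pos (mul_pos (mul_pos hb0 hs1) (by norm_num)) h3b
  have hle : cK p k ≤ (3/2) * sc k 1 := by
    rw [cK, div_le_iff₀ h3b]
    nlinarith
  have hge : bK p k * sc k 1 ≤ cK p k := by
    rw [cK, le_div_iff₀ h3b]
    nlinarith [mul_pos (mul_pos hb0 hs1) hb0]
  have hsc1 : sc k 1 ≤ 1/3 := by
    rw [sc_one]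
    calc (3:ℝ)^(-(k:ℤ)) ≤ (3:ℝ)^(-(1:ℤ)) :=
          (zpow_right_strictMono₀ (show (1:ℝ) < 3 by norm_num)).monotone (by omega)
      _ = 1/3 := by norm_num
  exact ⟨hge, hle, hc0, by nlinarith⟩

lemma cK_rpow_le {p : ℝ} (hp : 1 < p) {k : ℕ} (hk : 1 ≤ k) :
    (cK p k) ^ (p/(p-1)) ≤ cK p k := by
  obtain ⟨_, _, hc0, hc1⟩ := cK_bounds hp hk
  have hp' : (1:ℝ) ≤ p/(p-1) := by
    rw [le_div_iff₀ (by linarith : (0:ℝ) < p - 1)]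
    linarith
  calc (cK p k) ^ (p/(p-1)) ≤ (cK p k) ^ (1:ℝ) :=
        Real.rpow_le_rpow_of_exponent_ge hc0 hc1 hp'
    _ = cK p k := Real.rpow_one _

/-- geometric tail bound: indices `≥ 1`, ratio `≤ 1/3` -/
lemma geom_tail {r : ℝ} (hr0 : 0 ≤ r) (hr : r ≤ 1/3) {G : Finset ℕ}
    (hG : ∀ m ∈ G, 1 ≤ m) : ∑ m ∈ G, r^m ≤ 1/2 := by
  classical
  have hr1 : r < 1 := by linarith
  have hsum : Summable (fun t : ℕ => r^(t+1)) := by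
    have := (summable_geometric_of_lt_one hr0 hr1).mul_left r
    apply this.congr
    intro t
    rw [pow_succ]
    ring
  have himg : ∑ m ∈ G, r^m = ∑ t ∈ G.image (fun m => m - 1), r^(t+1) := by
    rw [Finset.sum_image ?_]
    · apply Finset.sum_congr rfl
      intro m hm
      congr 1
      have := hG m hm
      omega
    · intro x hx y hy h
      have := hG x hx
      have := hG y hy
      beta_reduce at h
      omega
  rw [himg]
  have hle : ∑ t ∈ G.image (fun m => m - 1), r^(t+1) ≤ ∑' t : ℕ, r^(t+1) :=
    Summable.sum_le_tsum _ (fun t _ => pow_nonneg hr0 _) hsum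
  have htsum : ∑' t : ℕ, r^(t+1) = r * (1-r)⁻¹ := by
    have h1 : ∀ t : ℕ, r^(t+1) = r * r^t := fun t => by rw [pow_succ]; ring
    rw [tsum_congr h1, tsum_mul_left, tsum_geometric_of_lt_one hr0 hr1]
  have hinv : (1-r)⁻¹ ≤ 3/2 := by
    rw [inv_eq_one_div, div_le_iff₀ (by linarith)]
    linarith
  calc ∑ t ∈ G.image (fun m => m - 1), r^(t+1) ≤ r * (1-r)⁻¹ := by rw [← htsum]; exact hle
    _ ≤ (1/3) * (3/2) := by
        apply mul_le_mul hr hinv (inv_nonneg.2 (by linarith)) (by norm_num)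
    _ = 1/2 := by norm_num

/-- triadic interval inside the middle third, not inside any child, is a union of children -/
lemma decomp_children {k : ℕ} (hk : 1 ≤ k) {j : ℕ} {K I : ℝ × ℝ} (hK : K ∈ Kfam k j)
    (htrI : IsTriadic I) (hlt : I.1 < I.2) (hImid : ivSet I ⊆ ivSet (mid K))
    (hnot : ∀ l, l < 3^(k-1) → ¬ ivSet I ⊆ ivSet (child k K l)) :
    ∃ G : Finset ℕ, G.Nonempty ∧ (∀ l ∈ G, l < 3^(k-1)) ∧
      ivSet I = ⋃ l ∈ G, ivSet (child k K l) := by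
  classical
  obtain ⟨n, jj, h1, h2⟩ := htrI
  have htriI : TriAt n I := ⟨jj, h1, h2⟩
  have hx₀ : I.1 ∈ ivSet I := Set.mem_Ico.2 ⟨le_refl _, hlt⟩
  have hx₀mid : I.1 ∈ ivSet (mid K) := hImid hx₀
  rw [mid_eq_union hk hK] at hx₀mid
  obtain ⟨l₀, hl₀, hx₀c⟩ := mem_iUnion₂.1 hx₀mid
  have hl₀' : l₀ < 3^(k-1) := Finset.mem_range.1 hl₀
  have htrC : ∀ l, l < 3^(k-1) → TriAt (((j+1)*k : ℕ) : ℤ) (child k K l) :=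
    fun l hl => Kfam_triAt hk (child_mem hK hl)
  have hscale : n ≤ (((j+1)*k : ℕ) : ℤ) := by
    by_contra hc
    push_neg at hc
    rcases TriAt.subset_or_disjoint (htrC l₀ hl₀') htriI hc.le with hsub | hdis
    · exact hnot l₀ hl₀' hsub
    · exact (eq_empty_iff_forall_notMem.1 hdis I.1) ⟨hx₀, hx₀c⟩
  have hcases : ∀ l, l < 3^(k-1) →
      ivSet (child k K l) ⊆ ivSet I ∨ ivSet (child k K l) ∩ ivSet I = ∅ :=
    fun l hl => TriAt.subset_or_disjoint htriI (htrC l hl) hscale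
  refine ⟨(Finset.range (3^(k-1))).filter (fun l => ivSet (child k K l) ⊆ ivSet I),
    ?_, fun l hl => Finset.mem_range.1 (Finset.mem_of_mem_filter _ hl), ?_⟩
  · refine ⟨l₀, Finset.mem_filter.2 ⟨hl₀, ?_⟩⟩
    rcases hcases l₀ hl₀' with h | h
    · exact h
    · exfalso
      exact (eq_empty_iff_forall_notMem.1 h I.1) ⟨hx₀c, hx₀⟩
  · apply Set.Subset.antisymm
    · intro x hx
      have hxm : x ∈ ivSet (mid K) := hImid hx
      rw [mid_eq_union hk hK] at hxm
      obtain ⟨l, hl, hxc⟩ := mem_iUnion₂.1 hxm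
      have hl' := Finset.mem_range.1 hl
      rcases hcases l hl' with h | h
      · exact mem_iUnion₂.2 ⟨l, Finset.mem_filter.2 ⟨hl, h⟩, hxc⟩
      · exfalso
        exact (eq_empty_iff_forall_notMem.1 h x) ⟨hxc, hx⟩
    · intro x hx
      obtain ⟨l, hl, hxc⟩ := mem_iUnion₂.1 hx
      exact (Finset.mem_filter.1 hl).2 hxc

/-- averages over a nonempty union of children -/
lemma avg_union {p : ℝ} (hp : 1 < p) {k : ℕ} (hk : 1 ≤ k) (ch : ℝ × ℝ → Bool) {j : ℕ}
    {K I : ℝ × ℝ} {G : Finset ℕ} (hK : K ∈ Kfam k j) (hG1 : G.Nonempty)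
    (hG2 : ∀ l ∈ G, l < 3^(k-1)) (hset : ivSet I = ⋃ l ∈ G, ivSet (child k K l)) :
    avg (wgt k ch) I = (aK k)^(j+1) ∧ avg (sgm p k ch) I = cK p k * (bK p k)^(j+1) ∧
      0 < len I ∧ ivSet I ⊆ ivSet (mid K) := by
  classical
  have hdisjG : (↑G : Set ℕ).PairwiseDisjoint (fun l => ivSet (child k K l)) := by
    intro l hl l' hl' hne
    simp only [Function.onFun]
    exact Set.disjoint_iff_inter_eq_empty.2 (child_disj hk hK hne)
  have hmeasG : ∀ l ∈ G, MeasurableSet (ivSet (child k K l)) := fun l _ => measurableSet_Ico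
  have hcard1 : (1:ℝ) ≤ (G.card : ℝ) := by
    have := Finset.card_pos.2 hG1
    exact_mod_cast this
  have hs' := sc_pos k (j+1)
  have hvolc : ∀ l ∈ G, volume (ivSet (child k K l)) = ENNReal.ofReal (sc k (j+1)) := by
    intro l _
    obtain ⟨hc1, hc2⟩ := child_pack hk hK l
    rw [ivSet, Real.volume_Ico, hc1, hc2]
    congr 1
    ring
  have hcard0 : (G.card:ℝ) ≠ 0 := by linarith
  have hsne : sc k (j+1) ≠ 0 := ne_of_gt hs'
  have hlen : len I = (G.card : ℝ) * sc k (j+1) := by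
    have hvol : volume (ivSet I) = ENNReal.ofReal ((G.card : ℝ) * sc k (j+1)) := by
      rw [hset, measure_biUnion_finset hdisjG hmeasG, Finset.sum_congr rfl hvolc,
        Finset.sum_const, nsmul_eq_mul, ← ENNReal.ofReal_natCast,
        ← ENNReal.ofReal_mul (Nat.cast_nonneg _)]
    rw [ivSet, Real.volume_Ico] at hvol
    have hpos2 : 0 < (G.card:ℝ) * sc k (j+1) := by nlinarith
    have hnn : 0 ≤ I.2 - I.1 := by
      by_contra hc
      push_neg at hc
      rw [ENNReal.ofReal_eq_zero.2 (by linarith)] at hvol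
      have h' := ENNReal.ofReal_pos.2 hpos2
      rw [← hvol] at h'
      exact lt_irrefl 0 h'
    exact (ENNReal.ofReal_eq_ofReal_iff hnn hpos2.le).1 hvol
  have hlen0 : 0 < len I := by rw [hlen]; nlinarith
  have hmw : mass (wgt k ch) I = (G.card : ℝ) * ((aK k)^(j+1) * sc k (j+1)) := by
    unfold mass
    rw [mass_eq_W hk ch, hset, lintegral_biUnion_finset hdisjG hmeasG]
    have hval : ∀ l ∈ G, (∫⁻ x in ivSet (child k K l), Wf k ch x)
        = ENNReal.ofReal ((aK k)^(j+1) * sc k (j+1)) :=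
      fun l hl => lint_W_K hk ch (child_mem hK (hG2 l hl))
    rw [Finset.sum_congr rfl hval, Finset.sum_const, nsmul_eq_mul, ← ENNReal.ofReal_natCast,
      ← ENNReal.ofReal_mul (Nat.cast_nonneg _), ENNReal.toReal_ofReal
        (mul_nonneg (Nat.cast_nonneg _)
          (mul_nonneg (pow_nonneg (aK_pos k).le _) hs'.le))]
  have hmv : mass (sgm p k ch) I = (G.card : ℝ) * (cK p k * ((bK p k)^(j+1) * sc k (j+1))) := by
    unfold mass
    rw [mass_eq_V hk ch, hset, lintegral_biUnion_finset hdisjG hmeasG]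
    have hval : ∀ l ∈ G, (∫⁻ x in ivSet (child k K l), Vf p k ch x)
        = ENNReal.ofReal (cK p k * ((bK p k)^(j+1) * sc k (j+1))) :=
      fun l hl => lint_V_K hp hk ch (child_mem hK (hG2 l hl))
    rw [Finset.sum_congr rfl hval, Finset.sum_const, nsmul_eq_mul, ← ENNReal.ofReal_natCast,
      ← ENNReal.ofReal_mul (Nat.cast_nonneg _), ENNReal.toReal_ofReal
        (mul_nonneg (Nat.cast_nonneg _) (mul_nonneg (cK_bounds hp hk).2.2.1.le
          (mul_nonneg (pow_nonneg (bK_pos p k).le _) hs'.le)))]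
  refine ⟨?_, ?_, hlen0, ?_⟩
  · rw [avg, hmw, hlen]
    field_simp
  · rw [avg, hmv, hlen]
    field_simp
  · rw [hset]
    apply Set.iUnion₂_subset
    intro l hl
    exact child_subset_mid hk hK (hG2 l hl)

/-- the two possible outer thirds `SJ` -/
lemma SJ_facts {k : ℕ} (hk : 1 ≤ k) (ch : ℝ × ℝ → Bool) {j : ℕ} {K : ℝ × ℝ}
    (hK : K ∈ Kfam k j) {SJ : ℝ × ℝ}
    (hSJ : SJ = (K.1, K.1 + len K / 3) ∨ SJ = mid K ∨ SJ = (K.2 - len K / 3, K.2))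
    (hIJsub : ivSet (IJ k ch (mid K)) ⊆ ivSet SJ) :
    ivSet SJ ⊆ ivSet K ∧ ivSet SJ ∩ ivSet (mid K) = ∅ := by
  obtain ⟨h2, hm1, hm2, hml⟩ := Kfam_pack hk hK
  have hlenK : len K = sc k j := Kfam_len hk hK
  have hsc := sc_pos k j
  have hIJne : (ivSet (IJ k ch (mid K))).Nonempty := by
    obtain ⟨hij2, _⟩ := IJ_pack hk ch hK
    exact Set.nonempty_Ico.2 (by rw [hij2]; nlinarith [sc_pos k (j+1)])
  rcases hSJ with h | h | h
  · subst h
    constructor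
    · apply Ico_subset_Ico (le_refl _)
      simp only [RTpaper.len]
      linarith
    · apply eq_empty_iff_forall_notMem.2
      rintro x ⟨⟨_, hx2⟩, ⟨hx3, _⟩⟩
      simp only [RTpaper.len] at hx2
      rw [hm1] at hx3
      rw [h2] at hx2
      linarith
  · exfalso
    obtain ⟨x, hx⟩ := hIJne
    have h1 : x ∈ ivSet (mid K) := by rw [← h]; exact hIJsub hx
    exact (eq_empty_iff_forall_notMem.1 (IJ_subset_K hk ch hK).2 x) ⟨hx, h1⟩
  · subst h
    constructor
    · apply Ico_subset_Ico ?_ (le_refl _)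
      simp only [RTpaper.len]
      linarith
    · apply eq_empty_iff_forall_notMem.2
      rintro x ⟨⟨hx1, _⟩, ⟨_, hx4⟩⟩
      simp only [RTpaper.len] at hx1
      rw [hm2] at hx4
      rw [h2] at hx1
      linarith

/-- averages over intervals of the `𝒮²` chain -/
lemma chain_member {p : ℝ} (hp : 1 < p) {k : ℕ} (hk : 1 ≤ k) (ch : ℝ × ℝ → Bool) {j : ℕ}
    {K I : ℝ × ℝ} (hK : K ∈ Kfam k j) (htrI : IsTriadic I) (hlt : I.1 < I.2)
    (hIK : ivSet I ⊆ ivSet K) (hImid : ivSet I ∩ ivSet (mid K) = ∅)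
    (hIJI : ivSet (IJ k ch (mid K)) ⊂ ivSet I) :
    ∃ m : ℕ, 1 ≤ m ∧ len I = 3^m * sc k (j+1) ∧
      avg (wgt k ch) I = (aK k)^(j+1) * ((3:ℝ)^m)⁻¹ ∧
      avg (sgm p k ch) I = (bK p k)^(j+1) * ((3:ℝ)^m)⁻¹ := by
  obtain ⟨n, jj, h1, h2⟩ := htrI
  have htriI : TriAt n I := ⟨jj, h1, h2⟩
  have htriIJ : TriAt (((j+1)*k : ℕ) : ℤ) (IJ k ch (mid K)) := IJ_triAt hk ch hK
  have hIJne : (ivSet (IJ k ch (mid K))).Nonempty := by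
    obtain ⟨hij2, _⟩ := IJ_pack hk ch hK
    exact Set.nonempty_Ico.2 (by rw [hij2]; nlinarith [sc_pos k (j+1)])
  have hn : n < (((j+1)*k : ℕ) : ℤ) := by
    by_contra hc
    push_neg at hc
    rcases TriAt.subset_or_disjoint htriIJ htriI hc with hsub | hdis
    · exact hIJI.2 hsub
    · obtain ⟨x, hx⟩ := hIJne
      exact (eq_empty_iff_forall_notMem.1 hdis x) ⟨hIJI.1 hx, hx⟩
  set m := ((((j+1)*k : ℕ) : ℤ) - n).toNat with hm
  have hm1 : 1 ≤ m := by omega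
  have hlenI : len I = 3^m * sc k (j+1) := by
    rw [htriI.len]
    have : (3:ℝ)^(-n) = (3:ℝ)^(m:ℤ) * (3:ℝ)^(-(((j+1)*k : ℕ) : ℤ)) := by
      rw [← zpow_add₀ three_ne]
      congr 1
      omega
    rw [this, zpow_natCast]
    rfl
  obtain ⟨hmw, hmv⟩ := mass_chain hp hk ch hK hIK hImid hIJI.1
  have h3m : ((3:ℝ)^m) ≠ 0 := pow_ne_zero _ three_ne
  have hsne : sc k (j+1) ≠ 0 := ne_of_gt (sc_pos k (j+1))
  refine ⟨m, hm1, hlenI, ?_, ?_⟩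
  · rw [avg, hmw, hlenI]
    field_simp
  · rw [avg, hmv, hlenI]
    field_simp

end RTaux
namespace RTaux
open RTpaper Set MeasureTheory

lemma sum_subtype_image {F : Set (ℝ × ℝ)} (u : Finset ↥F) (t : ℝ × ℝ → ℝ) :
    ∑ x ∈ u, t ↑x = ∑ I ∈ u.image (fun x : ↥F => (x : ℝ × ℝ)), t I :=
  (Finset.sum_image (fun x _ y _ h => Subtype.ext h)).symm

lemma pow_inv_rpow {q : ℝ} (m : ℕ) : (((3:ℝ)^m)⁻¹ : ℝ) ^ q = ((3:ℝ)^(-q))^m := by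
  rw [Real.inv_rpow (by positivity), rpow_nat_comm (by norm_num : (0:ℝ) ≤ 3) q m,
    ← inv_pow, ← Real.rpow_neg (by norm_num : (0:ℝ) ≤ 3)]

lemma rpow_geom_ratio {q : ℝ} (hq : 1 ≤ q) :
    0 ≤ (3:ℝ)^(-q) ∧ (3:ℝ)^(-q) ≤ 1/3 := by
  refine ⟨(Real.rpow_pos_of_pos three_pos _).le, ?_⟩
  calc (3:ℝ)^(-q) ≤ (3:ℝ)^(-(1:ℝ)) :=
        Real.rpow_le_rpow_of_exponent_le (by norm_num) (by linarith)
    _ = 1/3 := by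
        rw [Real.rpow_neg_one]
        norm_num

end RTaux

namespace RTaux
open RTpaper Set MeasureTheory

set_option maxHeartbeats 1000000 in
theorem statement7' (p : ℝ) (hp : 1 < p) :
    ∃ C : ℝ, 0 < C ∧ ∀ k : ℕ, 3000 < k → ∀ ch : ℝ × ℝ → Bool,
      ∀ ε : ℝ, 0 < ε → ε < 1 → ∀ S : Set (ℝ × ℝ), MSparse ε S →
      (∀ I ∈ S, IsTriadic I ∧ ivSet I ⊆ Set.Ico (0 : ℝ) 1) →
      ∀ K ∈ KK k, ∀ SJ : ℝ × ℝ,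
        (SJ = (K.1, K.1 + len K / 3) ∨ SJ = mid K ∨ SJ = (K.2 - len K / 3, K.2)) →
        ivSet (IJ k ch (mid K)) ⊆ ivSet SJ →
        ((sumTest p (wgt k ch) (sgm p k ch)
              {I | I ∈ S ∧ (I = K ∨ (ivSet I ⊆ ivSet (mid K) ∧
                ∀ K' ∈ chK k K, ¬ ivSet I ⊆ ivSet K'))} ≤
            C * ((3 : ℝ) ^ (-(k : ℤ)) * mass (wgt k ch) K) / (1 - ε) ∧
          sumTest (p / (p - 1)) (sgm p k ch) (wgt k ch)
              {I | I ∈ S ∧ (I = K ∨ (ivSet I ⊆ ivSet (mid K) ∧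
                ∀ K' ∈ chK k K, ¬ ivSet I ⊆ ivSet K'))} ≤
            C * mass (sgm p k ch) K / (1 - ε)) ∧
         (sumTest p (wgt k ch) (sgm p k ch)
              {I | I ∈ S ∧ ivSet (IJ k ch (mid K)) ⊂ ivSet I ∧ ivSet I ⊆ ivSet SJ} ≤
            C * ((3 : ℝ) ^ (-(k : ℤ)) * mass (wgt k ch) K) / (1 - ε) ∧
          sumTest (p / (p - 1)) (sgm p k ch) (wgt k ch)
              {I | I ∈ S ∧ ivSet (IJ k ch (mid K)) ⊂ ivSet I ∧ ivSet I ⊆ ivSet SJ} ≤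
            C * mass (sgm p k ch) K / (1 - ε))) := by
  classical
  refine ⟨4, by norm_num, ?_⟩
  intro k hk3 ch ε hε0 hε1 S hS htri K hKK SJ hSJ hIJsub
  have hk : 1 ≤ k := by omega
  obtain ⟨j, hK⟩ : ∃ j, K ∈ Kfam k j := mem_iUnion.1 hKK
  have hA0 := aK_pos k
  have hA1 := one_lt_aK hk
  have hA3 := aK_lt_three hk
  have hB0 := bK_pos p k
  have hB1 := bK_lt_one hp hk
  obtain ⟨hcge, hcle, hc0, hc1⟩ := cK_bounds hp hk
  have hs := sc_pos k j
  have hs' := sc_pos k (j+1)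
  have hs1 := sc_pos k 1
  have hP : (0:ℝ) < (aK k)^j := pow_pos hA0 j
  have hPB : (0:ℝ) < (bK p k)^j := pow_pos hB0 j
  have hε' : (0:ℝ) < 1 - ε := by linarith
  have hsc1le : sc k 1 ≤ 1/3 := by
    rw [sc_one]
    calc (3:ℝ)^(-(k:ℤ)) ≤ (3:ℝ)^(-(1:ℤ)) :=
          (zpow_right_strictMono₀ (show (1:ℝ) < 3 by norm_num)).monotone (by omega)
      _ = 1/3 := by norm_num
  have hmassW : mass (wgt k ch) K = (aK k)^j * sc k j := mass_W_K hk ch hK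
  have hmassV : mass (sgm p k ch) K = cK p k * ((bK p k)^j * sc k j) := mass_V_K hp hk ch hK
  have hlenK : len K = sc k j := Kfam_len hk hK
  have hlenKne : len K ≠ 0 := by rw [hlenK]; exact ne_of_gt hs
  have h3k1 : (3:ℝ)^(-(k:ℤ)) = sc k 1 := sc_one.symm
  have hsrel : sc k (j+1) = sc k 1 * sc k j := by
    unfold sc
    rw [← zpow_add₀ three_ne]
    congr 1
    push_cast [Nat.succ_mul]
    ring
  have havgwK : avg (wgt k ch) K = (aK k)^j := by
    rw [avg, hmassW, hlenK]
    field_simp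
  have havgvK : avg (sgm p k ch) K = cK p k * (bK p k)^j := by
    rw [avg, hmassV, hlenK]
    field_simp
  obtain ⟨hmK1, hmK2, hmK3, hmKlen⟩ := Kfam_pack hk hK
  -- the family 𝒮¹ and its members' averages
  set F₁ : Set (ℝ × ℝ) := {I | I ∈ S ∧ (I = K ∨ (ivSet I ⊆ ivSet (mid K) ∧
    ∀ K' ∈ chK k K, ¬ ivSet I ⊆ ivSet K'))} with hF₁
  have hmem1 : ∀ I ∈ F₁, I ≠ K →
      avg (wgt k ch) I = (aK k)^(j+1) ∧ avg (sgm p k ch) I = cK p k * (bK p k)^(j+1) ∧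
        0 < len I ∧ ivSet I ⊆ ivSet (mid K) ∧ I ∈ S := by
    rintro I ⟨hIS, hI⟩ hne
    rcases hI with rfl | ⟨hsub, hnot⟩
    · exact absurd rfl hne
    have hnotc : ∀ l, l < 3^(k-1) → ¬ ivSet I ⊆ ivSet (child k K l) := by
      intro l hl
      exact hnot (child k K l)
        ⟨j, hK, child_mem hK hl,
          (child_subset_mid hk hK hl).trans (mid_subset (Kfam_lt hk hK))⟩
    obtain ⟨G, hG1, hG2, hset⟩ :=
      decomp_children hk hK (htri I hIS).1 (hS.2.1 I hIS) hsub hnotc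
    obtain ⟨h1, h2, h3, h4⟩ := avg_union hp hk ch hK hG1 hG2 hset
    exact ⟨h1, h2, h3, h4, hIS⟩
  -- the family 𝒮² and its members' data
  set F₂ : Set (ℝ × ℝ) := {I | I ∈ S ∧ ivSet (IJ k ch (mid K)) ⊂ ivSet I ∧
    ivSet I ⊆ ivSet SJ} with hF₂
  obtain ⟨hSJK, hSJmid⟩ := SJ_facts hk ch hK hSJ hIJsub
  have hmem2 : ∀ I ∈ F₂, ∃ m : ℕ, 1 ≤ m ∧ len I = 3^m * sc k (j+1) ∧
      avg (wgt k ch) I = (aK k)^(j+1) * ((3:ℝ)^m)⁻¹ ∧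
      avg (sgm p k ch) I = (bK p k)^(j+1) * ((3:ℝ)^m)⁻¹ := by
    rintro I ⟨hIS, hIJI, hISJ⟩
    have hIK : ivSet I ⊆ ivSet K := hISJ.trans hSJK
    have hImid : ivSet I ∩ ivSet (mid K) = ∅ := by
      apply eq_empty_of_subset_empty
      rw [← hSJmid]
      exact fun x ⟨h1, h2⟩ => ⟨hISJ h1, h2⟩
    exact chain_member hp hk ch hK (htri I hIS).1 (hS.2.1 I hIS) hIK hImid hIJI
  choose! mf hmf1 hmf2 hmf3 hmf4 using hmem2
  -- injectivity of the chain index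
  have hIJne : (ivSet (IJ k ch (mid K))).Nonempty := by
    obtain ⟨hij2, _⟩ := IJ_pack hk ch hK
    exact Set.nonempty_Ico.2 (by rw [hij2]; nlinarith [sc_pos k (j+1)])
  have hmfinj : ∀ I ∈ F₂, ∀ I' ∈ F₂, mf I = mf I' → I = I' := by
    intro I hI I' hI' hmm
    have hlen : len I = len I' := by rw [hmf2 I hI, hmf2 I' hI', hmm]
    obtain ⟨x, hx⟩ := hIJne
    have hxI : x ∈ ivSet I := hI.2.1.1 hx
    have hxI' : x ∈ ivSet I' := hI'.2.1.1 hx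
    rcases hS.2.2.1 I hI.1 I' hI'.1 with h | h | h
    · exact pair_eq_of_ivSet_eq (hS.2.1 I hI.1)
        (ivSet_eq_of_len_le (hS.2.1 I hI.1) h (le_of_eq hlen.symm)).symm
    · exact (pair_eq_of_ivSet_eq (hS.2.1 I' hI'.1)
        (ivSet_eq_of_len_le (hS.2.1 I' hI'.1) h (le_of_eq hlen)).symm).symm
    · exfalso
      exact (eq_empty_iff_forall_notMem.1 h x) ⟨hxI, hxI'⟩
  constructor
  · constructor
    · -- 𝒮¹, exponent p
      rw [hmassW, h3k1]
      unfold sumTest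
      refine tsum_le_of_sum_le' (div_nonneg (mul_nonneg (by norm_num)
        (mul_nonneg hs1.le (mul_nonneg hP.le hs.le))) hε'.le) ?_
      intro u
      rw [sum_subtype_image u (fun I => avg (wgt k ch) I ^ p * avg (sgm p k ch) I * len I),
        le_div_iff₀ hε']
      set v := u.image (fun x : ↥F₁ => (x : ℝ × ℝ)) with hv
      have hvF : ∀ I ∈ v, I ∈ F₁ := by
        intro I hI
        obtain ⟨x, _, rfl⟩ := Finset.mem_image.1 hI
        exact x.2
      have hdat : ∀ I ∈ v.erase K,
          avg (wgt k ch) I = (aK k)^(j+1) ∧ avg (sgm p k ch) I = cK p k * (bK p k)^(j+1) ∧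
            0 < len I ∧ ivSet I ⊆ ivSet (mid K) ∧ I ∈ S :=
        fun I hI => hmem1 I (hvF I (Finset.mem_of_mem_erase hI)) (Finset.ne_of_mem_erase hI)
      have hSL : (1-ε) * (∑ I ∈ v.erase K, len I) ≤ sc k j / 3 := by
        have hs3 := sparse_finsum hε1 hε0.le hS htri (v.erase K).card (v.erase K) le_rfl
          (fun I hI => (hdat I (Finset.mem_coe.1 hI)).2.2.2.2)
          (mid K).1 (mid K).2 (by rw [hmK2, hmK3]; linarith)
          (fun I hI => (hdat I hI).2.2.2.1)
        calc (1-ε) * (∑ I ∈ v.erase K, len I) ≤ (mid K).2 - (mid K).1 := hs3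
          _ = sc k j / 3 := by rw [hmK2, hmK3]; ring
      have hSL0 : 0 ≤ ∑ I ∈ v.erase K, len I :=
        Finset.sum_nonneg (fun I hI => (hdat I hI).2.2.1.le)
      have hsum_erase : ∑ I ∈ v.erase K, avg (wgt k ch) I ^ p * avg (sgm p k ch) I * len I
          = cK p k * (aK k)^(j+1) * ∑ I ∈ v.erase K, len I := by
        rw [Finset.mul_sum]
        apply Finset.sum_congr rfl
        intro I hI
        obtain ⟨h1, h2, _, _, _⟩ := hdat I hI
        rw [h1, h2]
        have hid := idA (p := p) (k := k) (j+1)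
        linear_combination (cK p k * len I) * hid
      have hKterm : avg (wgt k ch) K ^ p * avg (sgm p k ch) K * len K
          = cK p k * ((aK k)^j * sc k j) := by
        rw [havgwK, havgvK, hlenK]
        have hid := idA (p := p) (k := k) j
        linear_combination (cK p k * sc k j) * hid
      have hsplit : ∑ I ∈ v, avg (wgt k ch) I ^ p * avg (sgm p k ch) I * len I ≤
          cK p k * ((aK k)^j * sc k j) + cK p k * (aK k)^(j+1) * ∑ I ∈ v.erase K, len I := by
        by_cases hKv : K ∈ v
        · rw [← Finset.add_sum_erase v _ hKv, hKterm, hsum_erase]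
        · rw [Finset.erase_eq_of_notMem hKv] at hsum_erase hSL0 ⊢
          rw [hsum_erase]
          nlinarith [mul_nonneg hc0.le (mul_nonneg hP.le hs.le)]
      have hpow : (aK k)^(j+1) = (aK k)^j * aK k := pow_succ _ _
      have hApos : (0:ℝ) < (aK k)^(j+1) := pow_pos hA0 _
      have hf2 : cK p k * (aK k)^(j+1) * ((1-ε) * (∑ I ∈ v.erase K, len I)) ≤
          cK p k * (aK k)^(j+1) * (sc k j / 3) :=
        mul_le_mul_of_nonneg_left hSL (mul_nonneg hc0.le hApos.le)
      have hcA : cK p k * aK k ≤ (3/2) * sc k 1 * 3 :=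
        mul_le_mul hcle hA3.le hA0.le (by nlinarith)
      have h1 := mul_le_mul_of_nonneg_right hsplit hε'.le
      have hexp : (cK p k * ((aK k)^j * sc k j) + cK p k * (aK k)^(j+1) *
            (∑ I ∈ v.erase K, len I)) * (1-ε)
          = cK p k * ((aK k)^j * sc k j) * (1-ε) +
            cK p k * (aK k)^(j+1) * ((1-ε) * (∑ I ∈ v.erase K, len I)) := by ring
      rw [hexp] at h1
      have hcPs0 : (0:ℝ) ≤ cK p k * ((aK k)^j * sc k j) :=
        mul_nonneg hc0.le (mul_nonneg hP.le hs.le)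
      have h3 : cK p k * ((aK k)^j * sc k j) * (1-ε) ≤ cK p k * ((aK k)^j * sc k j) := by
        calc cK p k * ((aK k)^j * sc k j) * (1-ε)
            ≤ cK p k * ((aK k)^j * sc k j) * 1 :=
              mul_le_mul_of_nonneg_left (by linarith) hcPs0
          _ = cK p k * ((aK k)^j * sc k j) := mul_one _
      have h5 : cK p k * ((aK k)^j * sc k j) ≤ (3/2) * sc k 1 * ((aK k)^j * sc k j) :=
        mul_le_mul_of_nonneg_right hcle (mul_nonneg hP.le hs.le)
      have h6 : cK p k * (aK k)^(j+1) * (sc k j / 3) ≤ (3/2) * sc k 1 * ((aK k)^j * sc k j) := by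
        have h6a := mul_le_mul_of_nonneg_right hcA
          (mul_nonneg hP.le (by positivity : (0:ℝ) ≤ sc k j / 3))
        calc cK p k * (aK k)^(j+1) * (sc k j / 3)
            = (cK p k * aK k) * ((aK k)^j * (sc k j / 3)) := by rw [hpow]; ring
          _ ≤ ((3/2) * sc k 1 * 3) * ((aK k)^j * (sc k j / 3)) := h6a
          _ = (3/2) * sc k 1 * ((aK k)^j * sc k j) := by ring
      have hsc1Ps0 : (0:ℝ) ≤ sc k 1 * ((aK k)^j * sc k j) :=
        mul_nonneg hs1.le (mul_nonneg hP.le hs.le)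
      linarith [h1, h3, h5, h6, hf2, hsc1Ps0]
    · -- 𝒮¹, exponent p'
      rw [hmassV]
      unfold sumTest
      refine tsum_le_of_sum_le' (div_nonneg (mul_nonneg (by norm_num)
        (mul_nonneg hc0.le (mul_nonneg hPB.le hs.le))) hε'.le) ?_
      intro u
      rw [sum_subtype_image u
          (fun I => avg (sgm p k ch) I ^ (p/(p-1)) * avg (wgt k ch) I * len I),
        le_div_iff₀ hε']
      set v := u.image (fun x : ↥F₁ => (x : ℝ × ℝ)) with hv
      have hvF : ∀ I ∈ v, I ∈ F₁ := by
        intro I hI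
        obtain ⟨x, _, rfl⟩ := Finset.mem_image.1 hI
        exact x.2
      have hdat : ∀ I ∈ v.erase K,
          avg (wgt k ch) I = (aK k)^(j+1) ∧ avg (sgm p k ch) I = cK p k * (bK p k)^(j+1) ∧
            0 < len I ∧ ivSet I ⊆ ivSet (mid K) ∧ I ∈ S :=
        fun I hI => hmem1 I (hvF I (Finset.mem_of_mem_erase hI)) (Finset.ne_of_mem_erase hI)
      have hSL : (1-ε) * (∑ I ∈ v.erase K, len I) ≤ sc k j / 3 := by
        have hs3 := sparse_finsum hε1 hε0.le hS htri (v.erase K).card (v.erase K) le_rfl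
          (fun I hI => (hdat I (Finset.mem_coe.1 hI)).2.2.2.2)
          (mid K).1 (mid K).2 (by rw [hmK2, hmK3]; linarith)
          (fun I hI => (hdat I hI).2.2.2.1)
        calc (1-ε) * (∑ I ∈ v.erase K, len I) ≤ (mid K).2 - (mid K).1 := hs3
          _ = sc k j / 3 := by rw [hmK2, hmK3]; ring
      have hSL0 : 0 ≤ ∑ I ∈ v.erase K, len I :=
        Finset.sum_nonneg (fun I hI => (hdat I hI).2.2.1.le)
      have hBpos : (0:ℝ) < (bK p k)^(j+1) := pow_pos hB0 _
      have hsum_erase : ∑ I ∈ v.erase K,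
            avg (sgm p k ch) I ^ (p/(p-1)) * avg (wgt k ch) I * len I
          ≤ cK p k * (bK p k)^(j+1) * ∑ I ∈ v.erase K, len I := by
        rw [Finset.mul_sum]
        apply Finset.sum_le_sum
        intro I hI
        obtain ⟨h1, h2, hlen0, _, _⟩ := hdat I hI
        rw [h1, h2, Real.mul_rpow hc0.le hBpos.le]
        have hid := idB hp (p := p) (k := k) (j+1)
        have key : (cK p k)^(p/(p-1)) * ((bK p k)^(j+1))^(p/(p-1)) * (aK k)^(j+1)
            = (cK p k)^(p/(p-1)) * (bK p k)^(j+1) := by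
          rw [mul_assoc, hid]
        rw [key]
        exact mul_le_mul_of_nonneg_right
          (mul_le_mul_of_nonneg_right (cK_rpow_le hp hk) hBpos.le) hlen0.le
      have hKterm : avg (sgm p k ch) K ^ (p/(p-1)) * avg (wgt k ch) K * len K
          ≤ cK p k * ((bK p k)^j * sc k j) := by
        rw [havgwK, havgvK, hlenK, Real.mul_rpow hc0.le hPB.le]
        have hid := idB hp (p := p) (k := k) j
        have key : (cK p k)^(p/(p-1)) * ((bK p k)^j)^(p/(p-1)) * (aK k)^j
            = (cK p k)^(p/(p-1)) * (bK p k)^j := by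
          rw [mul_assoc, hid]
        rw [key]
        calc (cK p k)^(p/(p-1)) * (bK p k)^j * sc k j
            ≤ cK p k * (bK p k)^j * sc k j :=
              mul_le_mul_of_nonneg_right
                (mul_le_mul_of_nonneg_right (cK_rpow_le hp hk) hPB.le) hs.le
          _ = cK p k * ((bK p k)^j * sc k j) := by ring
      have hsplit : ∑ I ∈ v, avg (sgm p k ch) I ^ (p/(p-1)) * avg (wgt k ch) I * len I ≤
          cK p k * ((bK p k)^j * sc k j) + cK p k * (bK p k)^(j+1) * ∑ I ∈ v.erase K, len I := by
        by_cases hKv : K ∈ v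
        · rw [← Finset.add_sum_erase v _ hKv]
          exact add_le_add hKterm hsum_erase
        · rw [Finset.erase_eq_of_notMem hKv] at hsum_erase hSL0 ⊢
          nlinarith [mul_nonneg hc0.le (mul_nonneg hPB.le hs.le)]
      have hpow : (bK p k)^(j+1) = (bK p k)^j * bK p k := pow_succ _ _
      have hf2 : cK p k * (bK p k)^(j+1) * ((1-ε) * (∑ I ∈ v.erase K, len I)) ≤
          cK p k * (bK p k)^(j+1) * (sc k j / 3) :=
        mul_le_mul_of_nonneg_left hSL (mul_nonneg hc0.le hBpos.le)
      have h1 := mul_le_mul_of_nonneg_right hsplit hε'.le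
      have hexp : (cK p k * ((bK p k)^j * sc k j) + cK p k * (bK p k)^(j+1) *
            (∑ I ∈ v.erase K, len I)) * (1-ε)
          = cK p k * ((bK p k)^j * sc k j) * (1-ε) +
            cK p k * (bK p k)^(j+1) * ((1-ε) * (∑ I ∈ v.erase K, len I)) := by ring
      rw [hexp] at h1
      have hcPs0 : (0:ℝ) ≤ cK p k * ((bK p k)^j * sc k j) :=
        mul_nonneg hc0.le (mul_nonneg hPB.le hs.le)
      have h3 : cK p k * ((bK p k)^j * sc k j) * (1-ε) ≤ cK p k * ((bK p k)^j * sc k j) := by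
        calc cK p k * ((bK p k)^j * sc k j) * (1-ε)
            ≤ cK p k * ((bK p k)^j * sc k j) * 1 :=
              mul_le_mul_of_nonneg_left (by linarith) hcPs0
          _ = cK p k * ((bK p k)^j * sc k j) := mul_one _
      have h6 : cK p k * (bK p k)^(j+1) * (sc k j / 3) ≤ cK p k * ((bK p k)^j * sc k j) := by
        have hbig : (0:ℝ) ≤ (cK p k * ((bK p k)^j * sc k j)) * (1 - bK p k / 3) :=
          mul_nonneg hcPs0 (by linarith)
        calc cK p k * (bK p k)^(j+1) * (sc k j / 3)
            = (cK p k * ((bK p k)^j * sc k j)) * (bK p k / 3) := by rw [hpow]; ring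
          _ ≤ cK p k * ((bK p k)^j * sc k j) := by nlinarith [hbig]
      linarith [h1, h3, h6, hf2, hcPs0]
  · constructor
    · -- 𝒮², exponent p
      rw [hmassW, h3k1]
      unfold sumTest
      refine tsum_le_of_sum_le' (div_nonneg (mul_nonneg (by norm_num)
        (mul_nonneg hs1.le (mul_nonneg hP.le hs.le))) hε'.le) ?_
      intro u
      rw [sum_subtype_image u (fun I => avg (wgt k ch) I ^ p * avg (sgm p k ch) I * len I),
        le_div_iff₀ hε']
      set v := u.image (fun x : ↥F₂ => (x : ℝ × ℝ)) with hv
      have hvF : ∀ I ∈ v, I ∈ F₂ := by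
        intro I hI
        obtain ⟨x, _, rfl⟩ := Finset.mem_image.1 hI
        exact x.2
      obtain ⟨hr0, hr13⟩ := rpow_geom_ratio hp.le
      have hterm : ∀ I ∈ v, avg (wgt k ch) I ^ p * avg (sgm p k ch) I * len I
          = ((aK k)^(j+1) * sc k (j+1)) * ((3:ℝ)^(-p))^(mf I) := by
        intro I hI
        have hIF := hvF I hI
        have h3m : ((3:ℝ)^(mf I)) ≠ 0 := pow_ne_zero _ three_ne
        have hcan : ((3:ℝ)^(mf I))⁻¹ * (3:ℝ)^(mf I) = 1 := inv_mul_cancel₀ h3m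
        have hid := idA (p := p) (k := k) (j+1)
        rw [hmf3 I hIF, hmf4 I hIF, hmf2 I hIF,
          Real.mul_rpow (pow_nonneg hA0.le _)
            (inv_nonneg.2 (by positivity : (0:ℝ) ≤ (3:ℝ)^(mf I))), pow_inv_rpow]
        linear_combination
          ((((3:ℝ)^(-p))^(mf I)) * sc k (j+1) * (((3:ℝ)^(mf I))⁻¹ * (3:ℝ)^(mf I))) * hid
          + ((((3:ℝ)^(-p))^(mf I)) * sc k (j+1) * (aK k)^(j+1)) * hcan
      have hgeom : ∑ I ∈ v, ((3:ℝ)^(-p))^(mf I) ≤ 1/2 := by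
        have hinjv : ∀ x ∈ v, ∀ y ∈ v, mf x = mf y → x = y :=
          fun x hx y hy h => hmfinj x (hvF x hx) y (hvF y hy) h
        rw [← Finset.sum_image (g := mf) (f := fun m => ((3:ℝ)^(-p))^m) hinjv]
        apply geom_tail hr0 hr13
        intro m hm
        obtain ⟨I, hI, rfl⟩ := Finset.mem_image.1 hm
        exact hmf1 I (hvF I hI)
      have hsum : ∑ I ∈ v, avg (wgt k ch) I ^ p * avg (sgm p k ch) I * len I
          ≤ ((aK k)^(j+1) * sc k (j+1)) * (1/2) := by
        rw [Finset.sum_congr rfl hterm, ← Finset.mul_sum]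
        exact mul_le_mul_of_nonneg_left hgeom
          (mul_nonneg (pow_nonneg hA0.le _) hs'.le)
      have hsum0 : 0 ≤ ∑ I ∈ v, avg (wgt k ch) I ^ p * avg (sgm p k ch) I * len I := by
        rw [Finset.sum_congr rfl hterm]
        exact Finset.sum_nonneg (fun I _ => mul_nonneg
          (mul_nonneg (pow_nonneg hA0.le _) hs'.le) (pow_nonneg hr0 _))
      have hpow : (aK k)^(j+1) = (aK k)^j * aK k := pow_succ _ _
      have h1 : (∑ I ∈ v, avg (wgt k ch) I ^ p * avg (sgm p k ch) I * len I) * (1-ε)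
          ≤ ∑ I ∈ v, avg (wgt k ch) I ^ p * avg (sgm p k ch) I * len I := by
        calc (∑ I ∈ v, avg (wgt k ch) I ^ p * avg (sgm p k ch) I * len I) * (1-ε)
            ≤ (∑ I ∈ v, avg (wgt k ch) I ^ p * avg (sgm p k ch) I * len I) * 1 :=
              mul_le_mul_of_nonneg_left (by linarith) hsum0
          _ = _ := mul_one _
      have h2 : ((aK k)^(j+1) * sc k (j+1)) * (1/2) ≤ (3/2) * (sc k 1 * ((aK k)^j * sc k j)) := by
        rw [hpow, hsrel]
        have hbig : (0:ℝ) ≤ ((aK k)^j * (sc k 1 * sc k j)) * (3 - aK k) :=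
          mul_nonneg (mul_nonneg hP.le (mul_nonneg hs1.le hs.le)) (by linarith)
        nlinarith [hbig]
      have hsc1Ps0 : (0:ℝ) ≤ sc k 1 * ((aK k)^j * sc k j) :=
        mul_nonneg hs1.le (mul_nonneg hP.le hs.le)
      linarith [h1, h2, hsum, hsc1Ps0]
    · -- 𝒮², exponent p'
      rw [hmassV]
      unfold sumTest
      have hp'1 : (1:ℝ) ≤ p/(p-1) := by
        rw [le_div_iff₀ (by linarith : (0:ℝ) < p - 1)]
        linarith
      refine tsum_le_of_sum_le' (div_nonneg (mul_nonneg (by norm_num)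
        (mul_nonneg hc0.le (mul_nonneg hPB.le hs.le))) hε'.le) ?_
      intro u
      rw [sum_subtype_image u
          (fun I => avg (sgm p k ch) I ^ (p/(p-1)) * avg (wgt k ch) I * len I),
        le_div_iff₀ hε']
      set v := u.image (fun x : ↥F₂ => (x : ℝ × ℝ)) with hv
      have hvF : ∀ I ∈ v, I ∈ F₂ := by
        intro I hI
        obtain ⟨x, _, rfl⟩ := Finset.mem_image.1 hI
        exact x.2
      obtain ⟨hr0, hr13⟩ := rpow_geom_ratio hp'1
      have hterm : ∀ I ∈ v, avg (sgm p k ch) I ^ (p/(p-1)) * avg (wgt k ch) I * len I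
          = ((bK p k)^(j+1) * sc k (j+1)) * ((3:ℝ)^(-(p/(p-1))))^(mf I) := by
        intro I hI
        have hIF := hvF I hI
        have h3m : ((3:ℝ)^(mf I)) ≠ 0 := pow_ne_zero _ three_ne
        have hcan : ((3:ℝ)^(mf I))⁻¹ * (3:ℝ)^(mf I) = 1 := inv_mul_cancel₀ h3m
        have hid := idB hp (p := p) (k := k) (j+1)
        rw [hmf3 I hIF, hmf4 I hIF, hmf2 I hIF,
          Real.mul_rpow (pow_nonneg hB0.le _)
            (inv_nonneg.2 (by positivity : (0:ℝ) ≤ (3:ℝ)^(mf I))), pow_inv_rpow]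
        linear_combination
          ((((3:ℝ)^(-(p/(p-1))))^(mf I)) * sc k (j+1) * (((3:ℝ)^(mf I))⁻¹ * (3:ℝ)^(mf I))) * hid
          + ((((3:ℝ)^(-(p/(p-1))))^(mf I)) * sc k (j+1) * (bK p k)^(j+1)) * hcan
      have hgeom : ∑ I ∈ v, ((3:ℝ)^(-(p/(p-1))))^(mf I) ≤ 1/2 := by
        have hinjv : ∀ x ∈ v, ∀ y ∈ v, mf x = mf y → x = y :=
          fun x hx y hy h => hmfinj x (hvF x hx) y (hvF y hy) h
        rw [← Finset.sum_image (g := mf) (f := fun m => ((3:ℝ)^(-(p/(p-1))))^m) hinjv]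
        apply geom_tail hr0 hr13
        intro m hm
        obtain ⟨I, hI, rfl⟩ := Finset.mem_image.1 hm
        exact hmf1 I (hvF I hI)
      have hsum : ∑ I ∈ v, avg (sgm p k ch) I ^ (p/(p-1)) * avg (wgt k ch) I * len I
          ≤ ((bK p k)^(j+1) * sc k (j+1)) * (1/2) := by
        rw [Finset.sum_congr rfl hterm, ← Finset.mul_sum]
        exact mul_le_mul_of_nonneg_left hgeom
          (mul_nonneg (pow_nonneg hB0.le _) hs'.le)
      have hsum0 : 0 ≤ ∑ I ∈ v, avg (sgm p k ch) I ^ (p/(p-1)) * avg (wgt k ch) I * len I := by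
        rw [Finset.sum_congr rfl hterm]
        exact Finset.sum_nonneg (fun I _ => mul_nonneg
          (mul_nonneg (pow_nonneg hB0.le _) hs'.le) (pow_nonneg hr0 _))
      have hpow : (bK p k)^(j+1) = (bK p k)^j * bK p k := pow_succ _ _
      have h1 : (∑ I ∈ v, avg (sgm p k ch) I ^ (p/(p-1)) * avg (wgt k ch) I * len I) * (1-ε)
          ≤ ∑ I ∈ v, avg (sgm p k ch) I ^ (p/(p-1)) * avg (wgt k ch) I * len I := by
        calc (∑ I ∈ v, avg (sgm p k ch) I ^ (p/(p-1)) * avg (wgt k ch) I * len I) * (1-ε)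
            ≤ (∑ I ∈ v, avg (sgm p k ch) I ^ (p/(p-1)) * avg (wgt k ch) I * len I) * 1 :=
              mul_le_mul_of_nonneg_left (by linarith) hsum0
          _ = _ := mul_one _
      have hcPs0 : (0:ℝ) ≤ cK p k * ((bK p k)^j * sc k j) :=
        mul_nonneg hc0.le (mul_nonneg hPB.le hs.le)
      have h2 : ((bK p k)^(j+1) * sc k (j+1)) * (1/2) ≤ 4 * (cK p k * ((bK p k)^j * sc k j)) := by
        rw [hpow, hsrel]
        have hkey := mul_le_mul_of_nonneg_right hcge (mul_nonneg hPB.le hs.le)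
        have hB1' : bK p k * sc k 1 ≤ 1 * 1 :=
          mul_le_mul hB1.le (by linarith [hsc1le]) hs1.le (by norm_num)
        nlinarith [hkey, hcPs0, mul_nonneg hPB.le hs.le]
      linarith [h1, h2, hsum, hcPs0]

end RTaux

/-- Lemma 4.6 (a) of the paper: the testing sums over the families `𝒮¹_K` and `𝒮²_K`
are bounded by `C(p)·3^{-k}·w_k(K)/(1-ε)` and `C(p)·σ_k(K)/(1-ε)`. Here `SJ` denotes
the triadic child of `K` containing `I(J)`, `J := K^m`. -/
theorem statement7 (p : ℝ) (hp : 1 < p) :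
    ∃ C : ℝ, 0 < C ∧ ∀ k : ℕ, 3000 < k → ∀ ch : ℝ × ℝ → Bool,
      ∀ ε : ℝ, 0 < ε → ε < 1 → ∀ S : Set (ℝ × ℝ), MSparse ε S →
      (∀ I ∈ S, IsTriadic I ∧ ivSet I ⊆ Set.Ico (0 : ℝ) 1) →
      ∀ K ∈ KK k, ∀ SJ : ℝ × ℝ,
        (SJ = (K.1, K.1 + len K / 3) ∨ SJ = mid K ∨ SJ = (K.2 - len K / 3, K.2)) →
        ivSet (IJ k ch (mid K)) ⊆ ivSet SJ →
        ((sumTest p (wgt k ch) (sgm p k ch)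
              {I | I ∈ S ∧ (I = K ∨ (ivSet I ⊆ ivSet (mid K) ∧
                ∀ K' ∈ chK k K, ¬ ivSet I ⊆ ivSet K'))} ≤
            C * ((3 : ℝ) ^ (-(k : ℤ)) * mass (wgt k ch) K) / (1 - ε) ∧
          sumTest (p / (p - 1)) (sgm p k ch) (wgt k ch)
              {I | I ∈ S ∧ (I = K ∨ (ivSet I ⊆ ivSet (mid K) ∧
                ∀ K' ∈ chK k K, ¬ ivSet I ⊆ ivSet K'))} ≤
            C * mass (sgm p k ch) K / (1 - ε)) ∧
         (sumTest p (wgt k ch) (sgm p k ch)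
              {I | I ∈ S ∧ ivSet (IJ k ch (mid K)) ⊂ ivSet I ∧ ivSet I ⊆ ivSet SJ} ≤
            C * ((3 : ℝ) ^ (-(k : ℤ)) * mass (wgt k ch) K) / (1 - ε) ∧
          sumTest (p / (p - 1)) (sgm p k ch) (wgt k ch)
              {I | I ∈ S ∧ ivSet (IJ k ch (mid K)) ⊂ ivSet I ∧ ivSet I ⊆ ivSet SJ} ≤
            C * mass (sgm p k ch) K / (1 - ε))) :=
  RTaux.statement7' p hp

end RTpaper
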